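/- arXiv:2007.06112 — 11 statements merged into one kernel-verified Lean document; each statement's English description precedes it below -/
import Mathlib

section
/- Let X be an n-by-n complex matrix with no eigenvalue on the closed negative real axis (-infinity, 0], and let L be the principal logarithm of X, i.e. exp(L) = X and every eigenvalue of L has imaginary part strictly between -pi and pi. If every entry of X is real, then every entry of L is real. -/
open Matrix Polynomial NormedSpace

section BanachLemmas

variable {A : Type*} [NormedRing A] [NormedAlgebra ℂ A] [CompleteSpace A]

set_option linter.unusedSectionVars false

lemma pl_pow_intertwine {a b z : A} (h : a * z = z * b) : ∀ k : ℕ, a ^ k * z = z * b ^ k := by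
  intro k
  induction k with
  | zero => simp
  | succ k ih =>
    calc a ^ (k+1) * z = a ^ k * (a * z) := by rw [pow_succ, mul_assoc]
    _ = (a ^ k * z) * b := by rw [h, mul_assoc]
    _ = z * (b ^ k * b) := by rw [ih, mul_assoc]
    _ = z * b ^ (k+1) := by rw [← pow_succ]

lemma pl_aeval_intertwine {a b z : A} (h : a * z = z * b) (p : ℂ[X]) :
    (Polynomial.aeval a) p * z = z * (Polynomial.aeval b) p := by
  induction p using Polynomial.induction_on' with
  | add p q hp hq => rw [map_add, map_add, add_mul, mul_add, hp, hq]
  | monomial k c =>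
    rw [Polynomial.aeval_monomial, Polynomial.aeval_monomial]
    calc algebraMap ℂ A c * a ^ k * z = algebraMap ℂ A c * (z * b ^ k) := by
          rw [mul_assoc, pl_pow_intertwine h k]
    _ = (algebraMap ℂ A c * z) * b ^ k := by rw [mul_assoc]
    _ = (z * algebraMap ℂ A c) * b ^ k := by rw [Algebra.commutes]
    _ = z * (algebraMap ℂ A c * b ^ k) := by rw [mul_assoc]

lemma pl_exp_intertwine {a b z : A} (h : a * z = z * b) :
    exp a * z = z * exp b := by
  simp only [exp_eq_tsum ℂ]
  calc (∑' k : ℕ, ((k.factorial : ℂ))⁻¹ • a ^ k) * z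
      = ∑' k : ℕ, (((k.factorial : ℂ))⁻¹ • a ^ k) * z :=
        ((expSeries_summable' (𝕂 := ℂ) a).tsum_mul_right z).symm
    _ = ∑' k : ℕ, z * (((k.factorial : ℂ))⁻¹ • b ^ k) := by
        refine tsum_congr fun k => ?_
        rw [smul_mul_assoc, pl_pow_intertwine h k, mul_smul_comm]
    _ = z * ∑' k : ℕ, ((k.factorial : ℂ))⁻¹ • b ^ k :=
        (expSeries_summable' (𝕂 := ℂ) b).tsum_mul_left z

lemma pl_pow_intertwine_left {a b z : A} (h : a * z = b * z) (hc : Commute a b) :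
    ∀ k : ℕ, a ^ k * z = b ^ k * z := by
  intro k
  induction k with
  | zero => simp
  | succ k ih =>
    calc a ^ (k+1) * z = a * (a ^ k * z) := by rw [pow_succ', mul_assoc]
    _ = a * (b ^ k * z) := by rw [ih]
    _ = (b ^ k * a) * z := by rw [← mul_assoc, (hc.pow_right k).eq]
    _ = b ^ k * (b * z) := by rw [mul_assoc, h]
    _ = b ^ (k+1) * z := by rw [← mul_assoc, ← pow_succ]

lemma pl_aeval_intertwine_left {a b z : A} (h : a * z = b * z) (hc : Commute a b) (p : ℂ[X]) :
    (Polynomial.aeval a) p * z = (Polynomial.aeval b) p * z := by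
  induction p using Polynomial.induction_on' with
  | add p q hp hq => rw [map_add, map_add, add_mul, add_mul, hp, hq]
  | monomial k c =>
    rw [Polynomial.aeval_monomial, Polynomial.aeval_monomial, mul_assoc, mul_assoc,
      pl_pow_intertwine_left h hc k]

lemma pl_smul_eigen_pow {d z : A} {c : ℂ} (h : d * z = c • z) :
    ∀ k : ℕ, d ^ k * z = c ^ k • z := by
  intro k
  induction k with
  | zero => simp
  | succ k ih =>
    calc d ^ (k+1) * z = d ^ k * (d * z) := by rw [pow_succ, mul_assoc]
    _ = c • (d ^ k * z) := by rw [h, mul_smul_comm]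
    _ = c ^ (k+1) • z := by rw [ih, smul_smul, ← pow_succ']

lemma pl_smul_eigen_exp {d z : A} {c : ℂ} (h : d * z = c • z) :
    exp d * z = Complex.exp c • z := by
  rw [Complex.exp_eq_exp_ℂ]
  simp only [exp_eq_tsum ℂ]
  have hc : Summable fun k : ℕ => ((k.factorial : ℂ))⁻¹ * c ^ k := by
    simpa [smul_eq_mul] using expSeries_summable' (𝕂 := ℂ) (𝔸 := ℂ) c
  calc (∑' k : ℕ, ((k.factorial : ℂ))⁻¹ • d ^ k) * z
      = ∑' k : ℕ, (((k.factorial : ℂ))⁻¹ • d ^ k) * z :=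
        ((expSeries_summable' (𝕂 := ℂ) d).tsum_mul_right z).symm
    _ = ∑' k : ℕ, (((k.factorial : ℂ))⁻¹ * c ^ k) • z := by
        refine tsum_congr fun k => ?_
        rw [smul_mul_assoc, pl_smul_eigen_pow h k, smul_smul]
    _ = (∑' k : ℕ, ((k.factorial : ℂ))⁻¹ * c ^ k) • z := Summable.tsum_smul_const hc z
    _ = (∑' k : ℕ, ((k.factorial : ℂ))⁻¹ • c ^ k) • z := by simp [smul_eq_mul]

lemma pl_eq_zero_of_isNilpotent_of_exp_eq_one {d : A} (hnil : IsNilpotent d)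
    (h1 : exp d = 1) : d = 0 := by
  obtain ⟨m, hm⟩ := hnil
  rcases le_or_gt m 1 with hm1 | hm1
  · interval_cases m
    · have h0 : (1 : A) = 0 := by simpa using hm
      calc d = d * 1 := (mul_one d).symm
      _ = d * 0 := by rw [h0]
      _ = 0 := mul_zero d
    · simpa using hm
  · have hpow : ∀ k, m ≤ k → d ^ k = 0 := by
      intro k hk
      rw [← Nat.sub_add_cancel hk, pow_add, hm, mul_zero]
    have hsum : (1 : A) = ∑ k ∈ Finset.range m, ((k.factorial : ℂ))⁻¹ • d ^ k := by
      rw [← h1]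
      simp only [exp_eq_tsum ℂ]
      exact tsum_eq_sum (fun k hk => by
        rw [hpow k (by simpa using hk), smul_zero])
    obtain ⟨m', rfl⟩ : ∃ m', m = m' + 1 := ⟨m - 1, by omega⟩
    rw [Finset.sum_range_succ'] at hsum
    have hS : (0 : A) = ∑ j ∈ Finset.range m', (((j+1).factorial : ℂ))⁻¹ • d ^ (j+1) := by
      have := hsum
      simp only [Nat.factorial_zero, Nat.cast_one, inv_one, pow_zero, one_smul] at this
      exact by
        have := sub_eq_zero.mpr this.symm
        simpa [add_sub_cancel_right] using this.symm
    set S : A := ∑ j ∈ Finset.range m', (((j+1).factorial : ℂ))⁻¹ • d ^ j with hSdef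
    have hdS : d * S = 0 := by
      rw [hSdef, Finset.mul_sum]
      rw [hS]
      refine Finset.sum_congr rfl fun j _ => ?_
      rw [mul_smul_comm, ← pow_succ']
    obtain ⟨m'', rfl⟩ : ∃ m'', m' = m'' + 1 := ⟨m' - 1, by omega⟩
    rw [hSdef, Finset.sum_range_succ'] at hdS
    set N : A := ∑ j ∈ Finset.range m'', (((j+2).factorial : ℂ))⁻¹ • d ^ (j+1) with hNdef
    have hdS' : d * (N + 1) = 0 := by
      have e : ∑ j ∈ Finset.range m'', (((j+1+1).factorial : ℂ))⁻¹ • d ^ (j+1) +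
          (((0+1).factorial : ℂ))⁻¹ • d ^ 0 = N + 1 := by
        simp [hNdef]
      rw [← e]; exact hdS
    have hNnil : IsNilpotent N := by
      have hNP : N = d * ∑ j ∈ Finset.range m'', (((j+2).factorial : ℂ))⁻¹ • d ^ j := by
        rw [hNdef, Finset.mul_sum]
        exact Finset.sum_congr rfl fun j _ => by rw [mul_smul_comm, ← pow_succ']
      set P : A := ∑ j ∈ Finset.range m'', (((j+2).factorial : ℂ))⁻¹ • d ^ j with hPdef
      have hdP : Commute d P := by
        refine Commute.sum_right _ _ _ fun j _ => ?_
        exact ((Commute.refl d).pow_right j).smul_right _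
      refine ⟨m'' + 1 + 1, ?_⟩
      rw [hNP, hdP.mul_pow, hm, zero_mul]
    obtain ⟨u, hu⟩ := hNnil.isUnit_one_add
    calc d = d * ((1 + N) * ↑u⁻¹) := by rw [← hu, Units.mul_inv, mul_one]
    _ = (d * (N + 1)) * ↑u⁻¹ := by rw [add_comm N 1, mul_assoc]
    _ = 0 := by rw [hdS', zero_mul]

lemma pl_descent {L Z : A} (hZ : exp L * Z = Z * exp L)
    (hLW : L * (L * Z - Z * L) = (L * Z - Z * L) * L) : L * Z - Z * L = 0 := by
  set W := L * Z - Z * L with hW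
  have hbase : L * Z = Z * L + W := by rw [hW]; abel
  have hkey : ∀ k : ℕ, L ^ (k+1) * Z = Z * L ^ (k+1) + (k+1) • (W * L ^ k) := by
    intro k
    induction k with
    | zero => simpa using hbase
    | succ k ih =>
      have h1 : L * (W * L ^ k) = W * L ^ (k+1) := by
        rw [← mul_assoc, hLW, mul_assoc, ← pow_succ']
      calc L ^ (k+1+1) * Z = L * (L ^ (k+1) * Z) := by rw [pow_succ', mul_assoc]
      _ = L * (Z * L ^ (k+1)) + (k+1) • (L * (W * L ^ k)) := by
          rw [ih, mul_add, mul_smul_comm]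
      _ = (L * Z) * L ^ (k+1) + (k+1) • (W * L ^ (k+1)) := by rw [mul_assoc, h1]
      _ = Z * L ^ (k+1+1) + W * L ^ (k+1) + (k+1) • (W * L ^ (k+1)) := by
          rw [hbase, add_mul, mul_assoc, ← pow_succ']
      _ = Z * L ^ (k+1+1) + (k+1+1) • (W * L ^ (k+1)) := by
          rw [succ_nsmul (W * L ^ (k+1)) (k+1), add_assoc, add_comm (W * L ^ (k+1))]
  have hsumL := expSeries_summable' (𝕂 := ℂ) L
  have hfs : Summable fun k : ℕ => ((k.factorial : ℂ))⁻¹ • (L ^ k * Z) := by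
    simpa only [smul_mul_assoc] using hsumL.mul_right Z
  have hgs : Summable fun k : ℕ => ((k.factorial : ℂ))⁻¹ • (Z * L ^ k) := by
    simpa only [mul_smul_comm] using hsumL.mul_left Z
  have hhs : Summable fun k : ℕ => ((k.factorial : ℂ))⁻¹ • ((k • (W * L ^ (k-1))) : A) := by
    apply (summable_nat_add_iff 1).mp
    have : (fun j : ℕ => (((j+1).factorial : ℂ))⁻¹ • (((j+1) • (W * L ^ (j+1-1))) : A))
        = fun j : ℕ => ((j.factorial : ℂ))⁻¹ • (W * L ^ j) := by
      funext j
      have hne : ((j:ℂ) + 1) ≠ 0 := by exact_mod_cast Nat.succ_ne_zero j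
      rw [Nat.add_sub_cancel, ← Nat.cast_smul_eq_nsmul ℂ, smul_smul]
      congr 1
      have h2 : (((j+1).factorial : ℂ)) = ((j:ℂ)+1) * ((j.factorial : ℂ)) := by
        rw [Nat.factorial_succ]; push_cast; ring
      have h3 : ((j+1 : ℕ) : ℂ) = (j:ℂ)+1 := by push_cast; ring
      rw [h2, h3, mul_inv, mul_right_comm, inv_mul_cancel₀ hne, one_mul]
    rw [this]
    simpa only [mul_smul_comm] using hsumL.mul_left W
  have hfgh : ∀ k : ℕ, ((k.factorial : ℂ))⁻¹ • (L ^ k * Z)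
      = ((k.factorial : ℂ))⁻¹ • (Z * L ^ k)
        + ((k.factorial : ℂ))⁻¹ • ((k • (W * L ^ (k-1))) : A) := by
    intro k
    cases k with
    | zero => simp
    | succ k =>
      rw [← smul_add]
      congr 1
      simpa using hkey k
  have hexpZ : exp L * Z = Z * exp L + W * exp L := by
    simp only [exp_eq_tsum ℂ]
    calc (∑' k : ℕ, ((k.factorial : ℂ))⁻¹ • L ^ k) * Z
        = ∑' k : ℕ, ((k.factorial : ℂ))⁻¹ • (L ^ k * Z) := by
          rw [← hsumL.tsum_mul_right Z]
          exact tsum_congr fun k => by rw [smul_mul_assoc]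
      _ = ∑' k : ℕ, (((k.factorial : ℂ))⁻¹ • (Z * L ^ k)
            + ((k.factorial : ℂ))⁻¹ • ((k • (W * L ^ (k-1))) : A)) := tsum_congr hfgh
      _ = (∑' k : ℕ, ((k.factorial : ℂ))⁻¹ • (Z * L ^ k))
            + ∑' k : ℕ, ((k.factorial : ℂ))⁻¹ • ((k • (W * L ^ (k-1))) : A) :=
          Summable.tsum_add hgs hhs
      _ = Z * (∑' k : ℕ, ((k.factorial : ℂ))⁻¹ • L ^ k)
            + W * (∑' k : ℕ, ((k.factorial : ℂ))⁻¹ • L ^ k) := by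
          congr 1
          · rw [← hsumL.tsum_mul_left Z]
            exact tsum_congr fun k => by rw [mul_smul_comm]
          · rw [Summable.tsum_eq_zero_add hhs]
            simp only [zero_smul, smul_zero, zero_add]
            rw [← hsumL.tsum_mul_left W]
            refine tsum_congr fun j => ?_
            have hne : ((j:ℂ) + 1) ≠ 0 := by exact_mod_cast Nat.succ_ne_zero j
            rw [mul_smul_comm, Nat.add_sub_cancel, ← Nat.cast_smul_eq_nsmul ℂ, smul_smul]
            congr 1
            have h2 : (((j+1).factorial : ℂ)) = ((j:ℂ)+1) * ((j.factorial : ℂ)) := by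
              rw [Nat.factorial_succ]; push_cast; ring
            have h3 : ((j+1 : ℕ) : ℂ) = (j:ℂ)+1 := by push_cast; ring
            rw [h2, h3, mul_inv, mul_right_comm, inv_mul_cancel₀ hne, one_mul]
  have hWexp : W * exp L = 0 := by
    have h := hexpZ
    rw [hZ] at h
    exact (left_eq_add (a := Z * exp L)).mp h
  letI : NormedAlgebra ℚ A := NormedAlgebra.restrictScalars ℚ ℂ A
  obtain ⟨u, hu⟩ := isUnit_exp L
  calc W = W * ↑u * ↑u⁻¹ := by rw [mul_assoc, Units.mul_inv, mul_one]
  _ = 0 := by rw [hu, hWexp, zero_mul]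

end BanachLemmas

section MatrixLemmas

variable {n : ℕ}

lemma pl_eval_charpoly (A : Matrix (Fin n) (Fin n) ℂ) (z : ℂ) :
    A.charpoly.eval z = (z • (1 : Matrix (Fin n) (Fin n) ℂ) - A).det := by
  rw [Matrix.charpoly, _root_.eval_det, Matrix.matPolyEquiv_charmatrix, eval_sub, eval_X, eval_C]
  congr 1
  rw [Matrix.scalar_apply]
  ext i j
  by_cases h : i = j <;> simp [Matrix.diagonal, Matrix.one_apply, h]

lemma pl_mem_spectrum_iff_det (A : Matrix (Fin n) (Fin n) ℂ) (z : ℂ) :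
    z ∈ spectrum ℂ A ↔ (z • (1 : Matrix (Fin n) (Fin n) ℂ) - A).det = 0 := by
  rw [spectrum.mem_iff, Matrix.isUnit_iff_isUnit_det, isUnit_iff_ne_zero, not_not,
    Algebra.algebraMap_eq_smul_one]

lemma pl_root_charpoly_mem_spectrum {A : Matrix (Fin n) (Fin n) ℂ} {z : ℂ}
    (hz : A.charpoly.eval z = 0) : z ∈ spectrum ℂ A := by
  rw [pl_mem_spectrum_iff_det, ← pl_eval_charpoly]; exact hz

lemma pl_shift_spectrum (A : Matrix (Fin n) (Fin n) ℂ) (c z : ℂ)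
    (h : z ∈ spectrum ℂ (A + c • 1)) : z - c ∈ spectrum ℂ A := by
  rw [pl_mem_spectrum_iff_det] at h ⊢
  have e : z • (1 : Matrix (Fin n) (Fin n) ℂ) - (A + c • 1)
      = (z - c) • (1 : Matrix (Fin n) (Fin n) ℂ) - A := by
    rw [sub_smul]; abel
  rwa [e] at h

lemma pl_isNilpotent_of_spectrum_zero (A : Matrix (Fin n) (Fin n) ℂ)
    (h : ∀ c ∈ spectrum ℂ A, c = 0) : IsNilpotent A := by
  have hmonic := A.charpoly_monic
  have hsplit : A.charpoly.Splits := IsAlgClosed.splits _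
  have hroots : ∀ r ∈ A.charpoly.roots, r = 0 := by
    intro r hr
    have : A.charpoly.eval r = 0 :=
      (Polynomial.mem_roots hmonic.ne_zero).mp hr
    exact h r (pl_root_charpoly_mem_spectrum this)
  have hrep : A.charpoly.roots = Multiset.replicate (Multiset.card A.charpoly.roots) (0 : ℂ) :=
    Multiset.eq_replicate.mpr ⟨rfl, hroots⟩
  have hcp : A.charpoly = X ^ Multiset.card A.charpoly.roots := by
    conv_lhs => rw [hsplit.eq_prod_roots_of_monic hmonic]
    rw [hrep]
    simp [Multiset.map_replicate, Multiset.prod_replicate]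
  refine ⟨Multiset.card A.charpoly.roots, ?_⟩
  have := A.aeval_self_charpoly
  rwa [hcp, map_pow, aeval_X] at this

lemma pl_end_nilpotent_of_eigenvalues_zero {V : Type*} [AddCommGroup V] [Module ℂ V]
    [FiniteDimensional ℂ V] (f : Module.End ℂ V)
    (h : ∀ c : ℂ, f.HasEigenvalue c → c = 0) : ∃ k : ℕ, f ^ k = 0 := by
  have hint : IsIntegral ℂ f := LinearMap.isIntegral f
  have hmonic := minpoly.monic hint
  have hsplit : (minpoly ℂ f).Splits := IsAlgClosed.splits _
  have hroots : ∀ r ∈ (minpoly ℂ f).roots, r = 0 := by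
    intro r hr
    have hr' : (minpoly ℂ f).IsRoot r := (Polynomial.mem_roots hmonic.ne_zero).mp hr
    exact h r (Module.End.hasEigenvalue_iff_isRoot.mpr hr')
  have hrep : (minpoly ℂ f).roots
      = Multiset.replicate (Multiset.card (minpoly ℂ f).roots) (0 : ℂ) :=
    Multiset.eq_replicate.mpr ⟨rfl, hroots⟩
  have hcp : minpoly ℂ f = X ^ Multiset.card (minpoly ℂ f).roots := by
    conv_lhs => rw [hsplit.eq_prod_roots_of_monic hmonic]
    rw [hrep]
    simp [Multiset.map_replicate, Multiset.prod_replicate]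
  refine ⟨Multiset.card (minpoly ℂ f).roots, ?_⟩
  have := minpoly.aeval ℂ f
  rwa [hcp, map_pow, aeval_X] at this

lemma pl_exists_root {n : ℕ} (hn : 0 < n) (B L : Matrix (Fin n) (Fin n) ℂ)
    (hnu : ¬ IsUnit ((Polynomial.aeval B) L.charpoly)) :
    ∃ μ ∈ spectrum ℂ B, L.charpoly.eval μ = 0 := by
  have hdeg : 0 < L.charpoly.degree := by
    rw [Matrix.charpoly_degree_eq_dim, Fintype.card_fin]
    exact_mod_cast hn
  have h0 : (0 : ℂ) ∈ spectrum ℂ ((Polynomial.aeval B) L.charpoly) :=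
    (spectrum.zero_mem_iff ℂ).mpr hnu
  rw [spectrum.map_polynomial_aeval_of_degree_pos B L.charpoly hdeg] at h0
  obtain ⟨μ, hμ, hev⟩ := h0
  exact ⟨μ, hμ, hev⟩

end MatrixLemmas

lemma pl_int_zero {k : ℤ} (h1 : -(2*Real.pi) < (k:ℝ)*(2*Real.pi))
    (h2 : (k:ℝ)*(2*Real.pi) < 2*Real.pi) : k = 0 := by
  have hpi := Real.pi_pos
  have hlt : (k:ℝ) < 1 := by nlinarith
  have hgt : (-1:ℝ) < (k:ℝ) := by nlinarith
  have ha : k < 1 := by exact_mod_cast hlt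
  have hb : -1 < k := by exact_mod_cast hgt
  omega

set_option maxHeartbeats 1000000 in
lemma pl_commutant {n : ℕ} (hn : 0 < n) (L X : Matrix (Fin n) (Fin n) ℂ)
    (hexp : NormedSpace.exp L = X)
    (hstrip : ∀ z ∈ spectrum ℂ L, -Real.pi < z.im ∧ z.im < Real.pi) :
    ∀ Z, X * Z = Z * X → L * Z = Z * L := by
  letI : SeminormedRing (Matrix (Fin n) (Fin n) ℂ) := Matrix.linftyOpSemiNormedRing
  letI : NormedRing (Matrix (Fin n) (Fin n) ℂ) := Matrix.linftyOpNormedRing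
  letI : NormedAlgebra ℂ (Matrix (Fin n) (Fin n) ℂ) := Matrix.linftyOpNormedAlgebra
  have hXunit : IsUnit X := hexp ▸ Matrix.isUnit_exp L
  have hLX : L * X = X * L := by
    rw [← hexp]; exact (pl_exp_intertwine (rfl : L * L = L * L)).symm
  let C : Submodule ℂ (Matrix (Fin n) (Fin n) ℂ) :=
    { carrier := {Z | X * Z = Z * X}
      add_mem' := by
        intro a b ha hb
        simp only [Set.mem_setOf_eq] at *
        rw [mul_add, add_mul, ha, hb]
      zero_mem' := by simp
      smul_mem' := by
        intro c a ha
        simp only [Set.mem_setOf_eq] at *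
        rw [mul_smul_comm, smul_mul_assoc, ha] }
  have hmemC : ∀ Z : Matrix (Fin n) (Fin n) ℂ, Z ∈ C ↔ X * Z = Z * X := fun Z => Iff.rfl
  let adL : Matrix (Fin n) (Fin n) ℂ →ₗ[ℂ] Matrix (Fin n) (Fin n) ℂ :=
    LinearMap.mulLeft ℂ L - LinearMap.mulRight ℂ L
  have hadL : ∀ Z, adL Z = L * Z - Z * L := fun Z => rfl
  have hCstable : ∀ Z ∈ C, adL Z ∈ C := by
    intro Z hZ
    rw [hmemC] at hZ ⊢
    rw [hadL, mul_sub, sub_mul]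
    congr 1
    · calc X * (L * Z) = L * (X * Z) := by rw [← mul_assoc, ← hLX, mul_assoc]
      _ = (L * Z) * X := by rw [hZ, ← mul_assoc]
    · calc X * (Z * L) = (X * Z) * L := by rw [← mul_assoc]
      _ = Z * (X * L) := by rw [hZ, mul_assoc]
      _ = (Z * L) * X := by rw [← hLX, ← mul_assoc]
  let T : Module.End ℂ C := adL.restrict hCstable
  have hTval : ∀ z : C, ((T z : Matrix (Fin n) (Fin n) ℂ)) = adL (z : Matrix (Fin n) (Fin n) ℂ) :=
    fun z => rfl
  have hTpow : ∀ (k : ℕ) (z : C),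
      (((T ^ k) z : Matrix (Fin n) (Fin n) ℂ)) = (adL ^ k) (z : Matrix (Fin n) (Fin n) ℂ) := by
    intro k
    induction k with
    | zero => intro z; rfl
    | succ k ih =>
      intro z
      rw [pow_succ', Module.End.mul_apply, hTval, ih, ← Module.End.mul_apply, ← pow_succ']
  have hT0 : ∀ c : ℂ, T.HasEigenvalue c → c = 0 := by
    intro c hc
    obtain ⟨z, hz⟩ := hc.exists_hasEigenvector
    have hzeq : T z = c • z := Module.End.mem_eigenspace_iff.mp hz.1
    set Z : Matrix (Fin n) (Fin n) ℂ := (z : Matrix (Fin n) (Fin n) ℂ) with hZdef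
    have hZ0 : Z ≠ 0 := by
      intro h
      exact hz.2 (ZeroMemClass.coe_eq_zero.mp h)
    have hZC : X * Z = Z * X := z.2
    have hcz : L * Z - Z * L = c • Z := by
      have h := congrArg (fun w : C => (w : Matrix (Fin n) (Fin n) ℂ)) hzeq
      rw [hTval, hadL] at h
      exact h
    have hZc1 : Z * (c • (1 : Matrix (Fin n) (Fin n) ℂ)) = c • Z := by
      rw [mul_smul_comm, mul_one]
    have hAZ : L * Z = Z * (L + c • 1) := by
      rw [mul_add, hZc1, ← hcz]; abel
    have h0 : Z * (Polynomial.aeval (L + c • 1)) L.charpoly = 0 := by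
      rw [← pl_aeval_intertwine hAZ, Matrix.aeval_self_charpoly, zero_mul]
    have hnu : ¬ IsUnit ((Polynomial.aeval (L + c • 1)) L.charpoly) := by
      intro h
      obtain ⟨u, hu⟩ := h
      apply hZ0
      calc Z = Z * ↑u * ↑u⁻¹ := by rw [mul_assoc, Units.mul_inv, mul_one]
      _ = 0 := by rw [hu, h0, zero_mul]
    obtain ⟨μ, hμmem, hμroot⟩ := pl_exists_root hn (L + c • 1) L hnu
    have h1 : μ ∈ spectrum ℂ L := pl_root_charpoly_mem_spectrum hμroot
    have h2 : μ - c ∈ spectrum ℂ L := pl_shift_spectrum L c μ hμmem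
    obtain ⟨hb1, hb2⟩ := hstrip μ h1
    obtain ⟨hb3, hb4⟩ := hstrip _ h2
    have hcim : c.im = μ.im - (μ - c).im := by rw [Complex.sub_im]; ring
    have him1 : -(2 * Real.pi) < c.im := by rw [hcim]; linarith
    have him2 : c.im < 2 * Real.pi := by rw [hcim]; linarith
    have hE : X * Z = Z * NormedSpace.exp (L + c • 1) := by
      rw [← hexp]; exact pl_exp_intertwine hAZ
    have hec : NormedSpace.exp (c • (1 : Matrix (Fin n) (Fin n) ℂ)) = Complex.exp c • 1 := by
      have h : NormedSpace.exp (c • (1 : Matrix (Fin n) (Fin n) ℂ)) * 1 = Complex.exp c • 1 :=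
        pl_smul_eigen_exp (d := c • (1 : Matrix (Fin n) (Fin n) ℂ))
        (z := (1 : Matrix (Fin n) (Fin n) ℂ)) (c := c) (by rw [mul_one])
      simpa using h
    have hsum : NormedSpace.exp (L + c • 1) = Complex.exp c • X := by
      rw [Matrix.exp_add_of_commute L (c • 1) ((Commute.one_right L).smul_right c), hec,
        mul_smul_comm, mul_one, hexp]
    have heq : Z * X = Complex.exp c • (Z * X) := by
      calc Z * X = X * Z := hZC.symm
      _ = Z * (Complex.exp c • X) := by rw [hE, hsum]
      _ = Complex.exp c • (Z * X) := by rw [mul_smul_comm]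
    have hZX0 : Z * X ≠ 0 := by
      intro h
      apply hZ0
      obtain ⟨u, hu⟩ := hXunit
      calc Z = Z * ↑u * ↑u⁻¹ := by rw [mul_assoc, Units.mul_inv, mul_one]
      _ = 0 := by rw [hu, h, zero_mul]
    have hec1 : Complex.exp c = 1 := by
      have h2 : (1 - Complex.exp c) • (Z * X) = 0 := by
        rw [sub_smul, one_smul]
        exact sub_eq_zero.mpr heq
      rcases smul_eq_zero.mp h2 with h3 | h3
      · exact (sub_eq_zero.mp h3).symm
      · exact absurd h3 hZX0
    obtain ⟨k, hk⟩ := Complex.exp_eq_one_iff.mp hec1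
    have hkim : c.im = (k : ℝ) * (2 * Real.pi) := by
      rw [hk]
      simp [Complex.mul_im, Complex.mul_re]
    have hk0 : k = 0 := by
      rw [hkim] at him1 him2
      exact pl_int_zero him1 him2
    rw [hk0] at hk
    simpa using hk
  obtain ⟨N, hN⟩ := pl_end_nilpotent_of_eigenvalues_zero T hT0
  have hdown : ∀ (k : ℕ) (Z : Matrix (Fin n) (Fin n) ℂ), X * Z = Z * X →
      (adL ^ k) Z = 0 → adL Z = 0 := by
    intro k
    induction k with
    | zero =>
      intro Z hZ h0
      simp only [pow_zero, Module.End.one_apply] at h0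
      rw [h0, map_zero]
    | succ k ih =>
      intro Z hZ hk1
      have h2 : (adL ^ k) (adL Z) = 0 := by
        rw [← Module.End.mul_apply, ← pow_succ]
        exact hk1
      have h3 : adL (adL Z) = 0 := ih (adL Z) ((hmemC _).mp (hCstable Z ((hmemC Z).mpr hZ))) h2
      have hLW : L * (L * Z - Z * L) = (L * Z - Z * L) * L := by
        have h4 := h3
        rw [hadL, hadL] at h4
        exact sub_eq_zero.mp h4
      have hZexp : NormedSpace.exp L * Z = Z * NormedSpace.exp L := by
        rw [hexp]; exact hZ
      have h5 := pl_descent hZexp hLW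
      rw [hadL]; exact h5
  intro Z hZ
  have hZC : Z ∈ C := (hmemC Z).mpr hZ
  have h0 : (adL ^ N) Z = 0 := by
    have h1 := hTpow N ⟨Z, hZC⟩
    rw [hN] at h1
    simpa using h1.symm
  have h6 := hdown N Z hZ h0
  rw [hadL] at h6
  exact sub_eq_zero.mp h6

open Matrix

/-- If `X` has real entries and no eigenvalue on `(-∞, 0]`, and `L` is its
principal logarithm, then `L` has real entries. -/
theorem principal_log_of_real_is_real
    (n : ℕ) (X L : Matrix (Fin n) (Fin n) ℂ)
    (hspec : ∀ z ∈ spectrum ℂ X, ¬ (z.im = 0 ∧ z.re ≤ 0))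
    (hexp : NormedSpace.exp L = X)
    (hstrip : ∀ z ∈ spectrum ℂ L, -Real.pi < z.im ∧ z.im < Real.pi)
    (hreal : ∀ i j, (starRingEnd ℂ) (X i j) = X i j) :
    ∀ i j, (starRingEnd ℂ) (L i j) = L i j := by
  rcases Nat.eq_zero_or_pos n with hn | hn
  · subst hn; intro i j; exact i.elim0
  letI : SeminormedRing (Matrix (Fin n) (Fin n) ℂ) := Matrix.linftyOpSemiNormedRing
  letI : NormedRing (Matrix (Fin n) (Fin n) ℂ) := Matrix.linftyOpNormedRing
  letI : NormedAlgebra ℂ (Matrix (Fin n) (Fin n) ℂ) := Matrix.linftyOpNormedAlgebra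
  set M : Matrix (Fin n) (Fin n) ℂ := L.map (starRingEnd ℂ) with hM
  have hXreal : X.map (starRingEnd ℂ) = X := by
    ext i j; simp [Matrix.map_apply, hreal i j]
  have hXunit : IsUnit X := hexp ▸ Matrix.isUnit_exp L
  have hexpM : NormedSpace.exp M = X := by
    have h1 : M = (Lᴴ)ᵀ := by
      ext i j; simp [hM, Matrix.map_apply, Matrix.conjTranspose_apply]
    rw [h1, Matrix.exp_transpose, Matrix.exp_conjTranspose, hexp]
    ext i j
    simp [Matrix.conjTranspose_apply, hreal i j]
  have hstripM : ∀ z ∈ spectrum ℂ M, -Real.pi < z.im ∧ z.im < Real.pi := by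
    intro z hz
    have hzc : (starRingEnd ℂ) z ∈ spectrum ℂ L := by
      rw [pl_mem_spectrum_iff_det] at hz ⊢
      have e : (((starRingEnd ℂ) z) • (1 : Matrix (Fin n) (Fin n) ℂ) - L).map (starRingEnd ℂ)
          = z • (1 : Matrix (Fin n) (Fin n) ℂ) - M := by
        ext i j
        by_cases h : i = j <;>
          simp [Matrix.map_apply, hM, Matrix.one_apply, h]
      have hdet : (starRingEnd ℂ)
          ((((starRingEnd ℂ) z) • (1 : Matrix (Fin n) (Fin n) ℂ) - L).det)
          = (z • (1 : Matrix (Fin n) (Fin n) ℂ) - M).det := by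
        rw [RingHom.map_det, RingHom.mapMatrix_apply, e]
      rw [hz] at hdet
      exact (starRingEnd ℂ).injective (by simpa using hdet)
    obtain ⟨h1, h2⟩ := hstrip _ hzc
    rw [Complex.conj_im] at h1 h2
    constructor <;> linarith
  have hLX : L * X = X * L := by
    rw [← hexp]; exact (pl_exp_intertwine (rfl : L * L = L * L)).symm
  have hMX : X * M = M * X := by
    calc X * M = X.map (starRingEnd ℂ) * L.map (starRingEnd ℂ) := by rw [hXreal]
    _ = (X * L).map (starRingEnd ℂ) := by rw [Matrix.map_mul]
    _ = (L * X).map (starRingEnd ℂ) := by rw [hLX]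
    _ = M * X := by rw [Matrix.map_mul, hXreal]
  have hcomm : L * M = M * L := pl_commutant hn L X hexp hstrip M hMX
  set D : Matrix (Fin n) (Fin n) ℂ := L - M with hD
  have hDM : Commute D M := by
    show D * M = M * D
    rw [hD, sub_mul, mul_sub, hcomm]
  have hexpD : NormedSpace.exp D = 1 := by
    have h1 : NormedSpace.exp (D + M) = NormedSpace.exp D * NormedSpace.exp M :=
      Matrix.exp_add_of_commute D M hDM
    have h2 : D + M = L := by rw [hD]; abel
    rw [h2, hexp, hexpM] at h1
    have h3 : NormedSpace.exp D * X = 1 * X := by rw [one_mul, ← h1]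
    exact hXunit.mul_right_cancel h3
  have hspecD : ∀ c ∈ spectrum ℂ D, c = 0 := by
    intro c hc
    rw [pl_mem_spectrum_iff_det] at hc
    obtain ⟨v, hv0, hv⟩ := (Matrix.exists_mulVec_eq_zero_iff).mpr hc
    set Z : Matrix (Fin n) (Fin n) ℂ := Matrix.of (fun i _ => v i) with hZdef
    have hZ0 : Z ≠ 0 := by
      intro h
      apply hv0
      funext i
      have h3 := congrFun (congrFun h i) ⟨0, hn⟩
      simpa [hZdef] using h3
    have hBZ : (c • (1 : Matrix (Fin n) (Fin n) ℂ) - D) * Z = 0 := by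
      ext i j
      have h4 := congrFun hv i
      simp only [Matrix.mulVec, dotProduct, Pi.zero_apply] at h4
      simp only [Matrix.mul_apply, hZdef, Matrix.of_apply, Matrix.zero_apply]
      exact h4
    have hDZ : D * Z = c • Z := by
      have h5 : c • Z - D * Z = 0 := by
        have h6 := hBZ
        rw [sub_mul, smul_mul_assoc, one_mul] at h6
        exact h6
      have := sub_eq_zero.mp h5
      exact this.symm
    have he1 : Complex.exp c • Z = Z := by
      have h : NormedSpace.exp D * Z = Complex.exp c • Z := pl_smul_eigen_exp hDZ
      rw [hexpD, one_mul] at h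
      exact h.symm
    have hec1 : Complex.exp c = 1 := by
      have h2 : (Complex.exp c - 1) • Z = 0 := by
        rw [sub_smul, one_smul]
        exact sub_eq_zero.mpr he1
      rcases smul_eq_zero.mp h2 with h3 | h3
      · exact sub_eq_zero.mp h3
      · exact absurd h3 hZ0
    have hLZ : L * Z = (M + c • 1) * Z := by
      have h7 : M + D = L := by rw [hD]; abel
      rw [add_mul, smul_mul_assoc, one_mul, ← hDZ, ← add_mul, h7]
    have hcommLB : Commute L (M + c • 1) := by
      exact Commute.add_right (hcomm : Commute L M) ((Commute.one_right L).smul_right c)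
    have h0 : (Polynomial.aeval (M + c • 1)) L.charpoly * Z = 0 := by
      have h8 := pl_aeval_intertwine_left hLZ hcommLB L.charpoly
      rw [Matrix.aeval_self_charpoly, zero_mul] at h8
      exact h8.symm
    have hnu : ¬ IsUnit ((Polynomial.aeval (M + c • 1)) L.charpoly) := by
      intro h
      obtain ⟨u, hu⟩ := h
      apply hZ0
      calc Z = ↑u⁻¹ * (↑u * Z) := by rw [← mul_assoc, Units.inv_mul, one_mul]
      _ = 0 := by rw [hu, h0, mul_zero]
    obtain ⟨μ, hμmem, hμroot⟩ := pl_exists_root hn (M + c • 1) L hnu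
    have h1 : μ ∈ spectrum ℂ L := pl_root_charpoly_mem_spectrum hμroot
    have h2 : μ - c ∈ spectrum ℂ M := pl_shift_spectrum M c μ hμmem
    obtain ⟨hb1, hb2⟩ := hstrip μ h1
    obtain ⟨hb3, hb4⟩ := hstripM _ h2
    have hcim : c.im = μ.im - (μ - c).im := by rw [Complex.sub_im]; ring
    have him1 : -(2 * Real.pi) < c.im := by rw [hcim]; linarith
    have him2 : c.im < 2 * Real.pi := by rw [hcim]; linarith
    obtain ⟨k, hk⟩ := Complex.exp_eq_one_iff.mp hec1
    have hkim : c.im = (k : ℝ) * (2 * Real.pi) := by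
      rw [hk]
      simp [Complex.mul_im, Complex.mul_re]
    have hk0 : k = 0 := by
      rw [hkim] at him1 him2
      exact pl_int_zero him1 him2
    rw [hk0] at hk
    simpa using hk
  have hDnil : IsNilpotent D := pl_isNilpotent_of_spectrum_zero D hspecD
  have hD0 : D = 0 := pl_eq_zero_of_isNilpotent_of_exp_eq_one hDnil hexpD
  have hLM : L = M := by rwa [hD, sub_eq_zero] at hD0
  intro i j
  have h9 := congrFun (congrFun hLM i) j
  rw [hM] at h9
  simpa [Matrix.map_apply] using h9.symm
end

section
/- Let X be a 2m-by-2m complex matrix with no eigenvalue on the closed negative real axis (-infinity, 0], and let L be the principal logarithm of X, i.e. exp(L) = X and every eigenvalue of L has imaginary part strictly between -pi and pi. If X is self-dual (X^♯ = X), then L is self-dual: L^♯ = L. -/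
open Matrix

/-- The matrix `Z = [[0, I], [-I, 0]]` on `ℂ^(m ⊕ m)`. -/
noncomputable def Zmat (m : ℕ) : Matrix (Fin m ⊕ Fin m) (Fin m ⊕ Fin m) ℂ :=
  Matrix.fromBlocks 0 1 (-1) 0

/-- The dual `X^♯ = -Z Xᵀ Z` of a `2m × 2m` complex matrix. -/
noncomputable def dual {m : ℕ} (X : Matrix (Fin m ⊕ Fin m) (Fin m ⊕ Fin m) ℂ) :
    Matrix (Fin m ⊕ Fin m) (Fin m ⊕ Fin m) ℂ :=
  -(Zmat m * Xᵀ * Zmat m)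

set_option linter.unusedSectionVars false

open Polynomial Finset


/-- Truncated exponential polynomial `∑_{k<n} X^k/k!`. -/
noncomputable def Ptr (n : ℕ) : Polynomial ℂ :=
  ∑ k ∈ Finset.range n, C ((k.factorial : ℂ)⁻¹) * X ^ k

/-- Truncated logarithm polynomial `∑_{j<n} (-1)^j X^(j+1)/(j+1)`. -/
noncomputable def Ltr (n : ℕ) : Polynomial ℂ :=
  ∑ j ∈ Finset.range n, C ((-1 : ℂ) ^ j / (j + 1)) * X ^ (j + 1)

lemma derivative_Ptr (n : ℕ) : derivative (Ptr (n + 1)) = Ptr n := by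
  rw [Ptr, map_sum, Finset.sum_range_succ']
  simp only [derivative_C_mul_X_pow]
  have : ∀ k : ℕ, ((k + 1).factorial : ℂ)⁻¹ * ((k + 1 : ℕ) : ℂ) = ((k.factorial : ℂ))⁻¹ := by
    intro k
    have hk : ((k : ℂ) + 1) ≠ 0 := Nat.cast_add_one_ne_zero k
    rw [Nat.factorial_succ]
    push_cast
    rw [mul_inv, mul_comm (((k : ℂ) + 1)⁻¹), mul_assoc, inv_mul_cancel₀ hk, mul_one]
  simp only [this]
  simp [Ptr]

lemma eval_zero_Ptr (n : ℕ) : (Ptr (n + 1)).eval 0 = 1 := by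
  rw [Ptr, eval_finset_sum, Finset.sum_range_succ']
  simp

lemma X_dvd_Ptr_sub_one (n : ℕ) : X ∣ Ptr (n + 1) - 1 := by
  rw [X_dvd_iff, coeff_zero_eq_eval_zero]
  simp [eval_zero_Ptr]

lemma derivative_Ltr (n : ℕ) :
    derivative (Ltr n) = ∑ j ∈ Finset.range n, (-X : Polynomial ℂ) ^ j := by
  rw [Ltr, map_sum]
  refine Finset.sum_congr rfl fun j _ => ?_
  rw [derivative_C_mul_X_pow]
  have h1 : ((-1 : ℂ) ^ j / ((j : ℂ) + 1)) * ((j + 1 : ℕ) : ℂ) = (-1 : ℂ) ^ j := by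
    push_cast
    exact div_mul_cancel₀ _ (Nat.cast_add_one_ne_zero j)
  simp only [h1, Nat.add_sub_cancel]
  conv_rhs => rw [neg_pow]
  have h2 : ((-1 : Polynomial ℂ)) = C (-1) := by simp
  rw [h2, ← map_pow]

/-- If `p(0) = 0` and `X^n ∣ p'`, then `X^(n+1) ∣ p` (char 0). -/
lemma X_pow_dvd_of_derivative (p : Polynomial ℂ) (n : ℕ) (h0 : p.coeff 0 = 0)
    (hd : X ^ n ∣ derivative p) : X ^ (n + 1) ∣ p := by
  rw [X_pow_dvd_iff] at hd ⊢
  intro d hd'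
  cases d with
  | zero => exact h0
  | succ k =>
    have h := hd k (by omega)
    rw [coeff_derivative] at h
    have : ((k : ℂ) + 1) ≠ 0 := Nat.cast_add_one_ne_zero k
    exact (mul_eq_zero.mp h).resolve_right this

/-- The key formal congruence: `log(exp T) ≡ T mod T^n`. -/
lemma log_comp_exp (n : ℕ) :
    (X : Polynomial ℂ) ^ n ∣ (Ltr n).comp (Ptr n - 1) - X := by
  cases n with
  | zero => exact one_dvd _
  | succ n =>
    set P := Ptr (n + 1) with hP
    set Y := P - 1 with hY
    set G := (Ltr (n + 1)).comp Y with hG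
    have hXY : X ∣ Y := X_dvd_Ptr_sub_one n
    -- derivative of G
    have hdG : derivative G = (∑ j ∈ Finset.range (n + 1), (-Y) ^ j) * derivative P := by
      have hdYP : derivative Y = derivative P := by rw [hY]; simp
      rw [hG, derivative_comp, derivative_Ltr, hdYP, mul_comm]
      congr 1
      rw [Polynomial.sum_comp]
      refine Finset.sum_congr rfl fun j _ => ?_
      rw [pow_comp, neg_comp, X_comp]
    -- geometric sum identity
    have hgeom : ∀ m : ℕ, (1 + Y) * (∑ j ∈ Finset.range m, (-Y) ^ j) = 1 - (-Y) ^ m := by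
      intro m
      have h2 : (∑ i ∈ Finset.range m, (-Y) ^ i) * (-Y - 1) = (-Y) ^ m - 1 :=
        geom_sum_mul (-Y) m
      linear_combination -h2
    -- X^n ∣ P - derivative P
    have hPd : X ^ n ∣ P - derivative P := by
      rw [hP, derivative_Ptr, Ptr, Ptr, Finset.sum_range_succ]
      have : (∑ k ∈ Finset.range n, C ((k.factorial : ℂ)⁻¹) * X ^ k)
          + C ((n.factorial : ℂ)⁻¹) * X ^ n
          - (∑ k ∈ Finset.range n, C ((k.factorial : ℂ)⁻¹) * X ^ k)
          = C ((n.factorial : ℂ)⁻¹) * X ^ n := by ring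
      rw [this]
      exact Dvd.intro_left _ rfl
    -- X^n ∣ P * derivative G - P
    have h8 : X ^ n ∣ P * derivative G - P := by
      have e1 : P * derivative G = (1 - (-Y) ^ (n + 1)) * derivative P := by
        rw [hdG, ← mul_assoc]
        have : P = 1 + Y := by rw [hY]; ring
        rw [this, hgeom]
      have e2 : P * derivative G - P = (derivative P - P) - (-Y) ^ (n + 1) * derivative P := by
        rw [e1]; ring
      rw [e2]
      apply dvd_sub
      · rw [← neg_sub P]; exact Dvd.dvd.neg_right hPd
      · have : X ^ n ∣ (-Y) ^ (n + 1) := by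
          have : X ^ (n + 1) ∣ (-Y) ^ (n + 1) := pow_dvd_pow_of_dvd (hXY.neg_right) _
          exact dvd_trans (pow_dvd_pow X (by omega)) this
        exact this.mul_right _
    -- approximate inverse of P
    have h9 : X ^ n ∣ P * (∑ j ∈ Finset.range n, (-Y) ^ j) - 1 := by
      have : P = 1 + Y := by rw [hY]; ring
      rw [this, hgeom]
      have : (1 : Polynomial ℂ) - (-Y) ^ n - 1 = -((-Y) ^ n) := by ring
      rw [this]
      exact (pow_dvd_pow_of_dvd hXY.neg_right n).neg_right
    -- X^n ∣ derivative G - 1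
    have h10 : X ^ n ∣ derivative G - 1 := by
      set Q := ∑ j ∈ Finset.range n, (-Y) ^ j with hQ
      have e : derivative G - 1 =
          Q * (P * derivative G - P) - (P * Q - 1) * (derivative G - 1) := by ring
      rw [e]
      exact dvd_sub (h8.mul_left _) (h9.mul_right _)
    -- constant coefficient of G is 0
    have h11 : G.coeff 0 = 0 := by
      rw [coeff_zero_eq_eval_zero, hG, eval_comp]
      have hY0 : Y.eval 0 = 0 := by rw [hY, hP]; simp [eval_zero_Ptr]
      rw [hY0, Ltr, eval_finset_sum]
      simp
    -- conclude
    have := X_pow_dvd_of_derivative (G - X) n (by simp [h11]) (by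
      rw [derivative_sub, derivative_X]; exact h10)
    exact this

section MatrixAnalysis

variable {ι : Type*} [Fintype ι] [DecidableEq ι]

attribute [local instance] Matrix.linftyOpSemiNormedRing Matrix.linftyOpNormedRing
  Matrix.linftyOpNormedAlgebra

/-- `M ↦ M *ᵥ v` as a linear map. -/
noncomputable def mulVecLM (v : ι → ℂ) : Matrix ι ι ℂ →ₗ[ℂ] (ι → ℂ) where
  toFun M := M.mulVec v
  map_add' A B := Matrix.add_mulVec A B v
  map_smul' c A := Matrix.smul_mulVec c A v

lemma sum_mulVec {α : Type*} (s : Finset α) (f : α → Matrix ι ι ℂ) (w : ι → ℂ) :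
    (∑ a ∈ s, f a) *ᵥ w = ∑ a ∈ s, f a *ᵥ w :=
  map_sum (mulVecLM w) f s

lemma commute_aeval (N : Matrix ι ι ℂ) (q : Polynomial ℂ) : Commute N (aeval N q) := by
  show N * aeval N q = aeval N q * N
  calc N * aeval N q = aeval N (X * q) := by rw [_root_.map_mul, aeval_X]
  _ = aeval N (q * X) := by rw [mul_comm]
  _ = aeval N q * N := by rw [_root_.map_mul, aeval_X]

lemma pow_kill_mulVec {N M : Matrix ι ι ℂ} {n : ℕ} {w : ι → ℂ}
    (h : Commute (N ^ n) M) (hw : (N ^ n) *ᵥ w = 0) : (N ^ n) *ᵥ (M *ᵥ w) = 0 := by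
  rw [Matrix.mulVec_mulVec, h.eq, ← Matrix.mulVec_mulVec, hw, Matrix.mulVec_zero]

/-- On vectors killed by `N^n`, `exp N` acts as the truncated exponential polynomial. -/
lemma exp_mulVec_of_pow_eq_zero (N : Matrix ι ι ℂ) (n : ℕ) (w : ι → ℂ)
    (hw : (N ^ n) *ᵥ w = 0) :
    (NormedSpace.exp N) *ᵥ w = (aeval N (Ptr n)) *ᵥ w := by
  have hsum : Summable (fun k : ℕ => ((k.factorial : ℂ)⁻¹) • N ^ k) :=
    NormedSpace.expSeries_summable' N
  have h1 : (NormedSpace.exp N) *ᵥ w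
      = ∑' k : ℕ, ((k.factorial : ℂ)⁻¹) • ((N ^ k) *ᵥ w) := by
    rw [NormedSpace.exp_eq_tsum (𝕂 := ℂ)]
    have := (LinearMap.toContinuousLinearMap (mulVecLM (ι := ι) w)).map_tsum hsum
    simpa [mulVecLM] using this
  rw [h1]
  have h2 : ∀ k ∉ Finset.range n, ((k.factorial : ℂ)⁻¹) • ((N ^ k) *ᵥ w) = 0 := by
    intro k hk
    rw [Finset.mem_range, not_lt] at hk
    have : N ^ k = N ^ (k - n) * N ^ n := by rw [← pow_add]; congr 1; omega
    rw [this, ← Matrix.mulVec_mulVec, hw, Matrix.mulVec_zero, smul_zero]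
  rw [tsum_eq_sum h2]
  have h3 : aeval N (Ptr n) = ∑ k ∈ Finset.range n, ((k.factorial : ℂ)⁻¹) • N ^ k := by
    rw [Ptr, map_sum]
    refine Finset.sum_congr rfl fun k _ => ?_
    rw [_root_.map_mul, aeval_C, map_pow, aeval_X, Algebra.smul_def]
  rw [h3, _root_.sum_mulVec]
  exact Finset.sum_congr rfl fun k _ => (Matrix.smul_mulVec _ _ _).symm

/-- Powers of `exp N - 1` act like powers of the truncated polynomial on killed vectors. -/
lemma pow_exp_sub_one_mulVec (N : Matrix ι ι ℂ) (n : ℕ) (k : ℕ) :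
    ∀ w : ι → ℂ, (N ^ n) *ᵥ w = 0 →
      ((NormedSpace.exp N - 1) ^ k) *ᵥ w = (aeval N ((Ptr n - 1) ^ k)) *ᵥ w := by
  induction k with
  | zero => intro w _; simp
  | succ k ih =>
    intro w hw
    have hstep : (NormedSpace.exp N - 1) *ᵥ w = (aeval N (Ptr n - 1)) *ᵥ w := by
      rw [Matrix.sub_mulVec, exp_mulVec_of_pow_eq_zero N n w hw, map_sub, Matrix.sub_mulVec]
      simp
    have hw' : (N ^ n) *ᵥ ((aeval N (Ptr n - 1)) *ᵥ w) = 0 :=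
      pow_kill_mulVec ((commute_aeval N (Ptr n - 1)).pow_left n) hw
    calc ((NormedSpace.exp N - 1) ^ (k + 1)) *ᵥ w
        = ((NormedSpace.exp N - 1) ^ k * (NormedSpace.exp N - 1)) *ᵥ w := by rw [pow_succ]
      _ = ((NormedSpace.exp N - 1) ^ k) *ᵥ ((NormedSpace.exp N - 1) *ᵥ w) := by
          rw [Matrix.mulVec_mulVec]
      _ = ((NormedSpace.exp N - 1) ^ k) *ᵥ ((aeval N (Ptr n - 1)) *ᵥ w) := by rw [hstep]
      _ = (aeval N ((Ptr n - 1) ^ k)) *ᵥ ((aeval N (Ptr n - 1)) *ᵥ w) := ih _ hw'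
      _ = (aeval N ((Ptr n - 1) ^ k) * aeval N (Ptr n - 1)) *ᵥ w := by
          rw [Matrix.mulVec_mulVec]
      _ = (aeval N ((Ptr n - 1) ^ (k + 1))) *ᵥ w := by rw [← _root_.map_mul, ← pow_succ]

/-- General polynomial transfer. -/
lemma aeval_exp_sub_one_mulVec (N : Matrix ι ι ℂ) (n : ℕ) (p : Polynomial ℂ) (w : ι → ℂ)
    (hw : (N ^ n) *ᵥ w = 0) :
    (aeval (NormedSpace.exp N - 1) p) *ᵥ w = (aeval N (p.comp (Ptr n - 1))) *ᵥ w := by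
  induction p using Polynomial.induction_on' with
  | add p q hp hq =>
    rw [map_add, add_comp, map_add, Matrix.add_mulVec, Matrix.add_mulVec, hp, hq]
  | monomial k a =>
    have hc : ((monomial k) a).comp (Ptr n - 1) = C a * (Ptr n - 1) ^ k := by
      rw [← C_mul_X_pow_eq_monomial, mul_comp, C_comp, X_pow_comp]
    rw [aeval_monomial, hc, _root_.map_mul, aeval_C, ← Algebra.smul_def, ← Algebra.smul_def,
      Matrix.smul_mulVec, Matrix.smul_mulVec, pow_exp_sub_one_mulVec N n k w hw]

/-- A vector killed by `N^n` is killed by `(exp N - 1)^n`. -/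
lemma pow_exp_sub_one_eq_zero (N : Matrix ι ι ℂ) (n : ℕ) (w : ι → ℂ)
    (hw : (N ^ n) *ᵥ w = 0) : ((NormedSpace.exp N - 1) ^ n) *ᵥ w = 0 := by
  cases n with
  | zero => simpa using hw
  | succ n =>
    rw [pow_exp_sub_one_mulVec N (n + 1) (n + 1) w hw]
    obtain ⟨S, hS⟩ := pow_dvd_pow_of_dvd (X_dvd_Ptr_sub_one n) (n + 1)
    rw [hS, _root_.map_mul, map_pow, aeval_X, ((commute_aeval N S).pow_left (n + 1)).eq,
      ← Matrix.mulVec_mulVec, hw, Matrix.mulVec_zero]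

/-- Log recovery: `N *ᵥ w` is recovered from `exp N` on killed vectors. -/
lemma log_recovery (N : Matrix ι ι ℂ) (n : ℕ) (w : ι → ℂ)
    (hw : (N ^ n) *ᵥ w = 0) :
    N *ᵥ w = (aeval (NormedSpace.exp N - 1) (Ltr n)) *ᵥ w := by
  rw [aeval_exp_sub_one_mulVec N n _ w hw]
  obtain ⟨S, hS⟩ := log_comp_exp n
  have h1 : (Ltr n).comp (Ptr n - 1) = X + X ^ n * S := by
    rw [← hS]; ring
  rw [h1, map_add, _root_.map_mul, map_pow, aeval_X, Matrix.add_mulVec,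
    ((commute_aeval N S).pow_left n).eq, ← Matrix.mulVec_mulVec, hw,
    Matrix.mulVec_zero, add_zero]

lemma exp_smul_decomp (A : Matrix ι ι ℂ) (μ : ℂ) :
    NormedSpace.exp A = Complex.exp μ • NormedSpace.exp (A - μ • 1) := by
  have h : Commute (μ • (1 : Matrix ι ι ℂ)) (A - μ • 1) :=
    ((Commute.one_left _).smul_left μ)
  have hA : A = μ • 1 + (A - μ • 1) := by abel
  conv_lhs => rw [hA]
  rw [Matrix.exp_add_of_commute _ _ h]
  have h1 : (μ • (1 : Matrix ι ι ℂ)) = algebraMap ℂ _ μ := (Algebra.algebraMap_eq_smul_one μ).symm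
  have h2 : NormedSpace.exp (algebraMap ℂ (Matrix ι ι ℂ) μ) = algebraMap ℂ _ (NormedSpace.exp μ) := by
    rw [Matrix.algebraMap_eq_diagonal, Matrix.algebraMap_eq_diagonal, Matrix.exp_diagonal]
    congr 1
    ext i
    simp [Pi.algebraMap_apply]
  rw [h1, h2, ← Algebra.smul_def]
  congr 1
  exact (congr_fun Complex.exp_eq_exp_ℂ μ).symm

lemma key_lemma (A : Matrix ι ι ℂ) (μ : ℂ) (n : ℕ) (v : ι → ℂ)
    (hv : ((A - μ • 1) ^ n) *ᵥ v = 0) :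
    ((NormedSpace.exp A - Complex.exp μ • 1) ^ n) *ᵥ v = 0 ∧
    A *ᵥ v = μ • v + (aeval (Complex.exp (-μ) • NormedSpace.exp A - 1) (Ltr n)) *ᵥ v := by
  set N := A - μ • 1 with hN
  have hE : NormedSpace.exp A = Complex.exp μ • NormedSpace.exp N := exp_smul_decomp A μ
  have hEN : Complex.exp (-μ) • NormedSpace.exp A = NormedSpace.exp N := by
    rw [hE, smul_smul, ← Complex.exp_add, neg_add_cancel, Complex.exp_zero, one_smul]
  constructor
  · have h1 : NormedSpace.exp A - Complex.exp μ • 1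
        = Complex.exp μ • (NormedSpace.exp N - 1) := by
      rw [hE, smul_sub]
    rw [h1, _root_.smul_pow, Matrix.smul_mulVec, pow_exp_sub_one_eq_zero N n v hv, smul_zero]
  · have h2 : A *ᵥ v = μ • v + N *ᵥ v := by
      have hA : A = μ • 1 + N := by rw [hN]; abel
      conv_lhs => rw [hA]
      rw [Matrix.add_mulVec, Matrix.smul_mulVec, Matrix.one_mulVec]
    rw [h2, hEN, log_recovery N n v hv]

lemma kill_upgrade {M : Matrix ι ι ℂ} {v : ι → ℂ} {k n : ℕ} (hk : (M ^ k) *ᵥ v = 0)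
    (hkn : k ≤ n) : (M ^ n) *ᵥ v = 0 := by
  have : M ^ n = M ^ (n - k) * M ^ k := by rw [← pow_add]; congr 1; omega
  rw [this, ← Matrix.mulVec_mulVec, hk, Matrix.mulVec_zero]

lemma strip_inj {μ μ' : ℂ} (h1 : -Real.pi < μ.im ∧ μ.im < Real.pi)
    (h2 : -Real.pi < μ'.im ∧ μ'.im < Real.pi)
    (he : Complex.exp μ' = Complex.exp μ) : μ' = μ := by
  obtain ⟨k, hk⟩ := Complex.exp_eq_exp_iff_exists_int.mp he
  have him : μ'.im = μ.im + (k : ℝ) * (2 * Real.pi) := by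
    have := congrArg Complex.im hk
    simpa [Complex.add_im, Complex.mul_im, Complex.mul_re] using this
  have hπ : (0 : ℝ) < Real.pi := Real.pi_pos
  have hk0 : k = 0 := by
    rcases lt_trichotomy k 0 with h | h | h
    · exfalso
      have : (k : ℝ) ≤ -1 := by exact_mod_cast (by omega : k ≤ -1)
      nlinarith [h1.1, h1.2, h2.1, h2.2]
    · exact h
    · exfalso
      have : (1 : ℝ) ≤ (k : ℝ) := by exact_mod_cast h
      nlinarith [h1.1, h1.2, h2.1, h2.2]
  rw [hk0] at hk
  simpa using hk

/-- Membership in generalized eigenspace of `toLinAlgEquiv'` via matrix powers. -/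
lemma mem_maxGen_iff (M : Matrix ι ι ℂ) (μ : ℂ) (v : ι → ℂ) :
    v ∈ Module.End.maxGenEigenspace (Matrix.toLinAlgEquiv' M) μ
      ↔ ∃ k : ℕ, ((M - μ • 1) ^ k) *ᵥ v = 0 := by
  rw [Module.End.mem_maxGenEigenspace]
  refine exists_congr fun k => ?_
  have : (Matrix.toLinAlgEquiv' M - μ • 1) ^ k
      = Matrix.toLinAlgEquiv' ((M - μ • 1) ^ k) := by
    rw [map_pow, map_sub, _root_.map_smul, _root_.map_one]
  rw [this, Matrix.toLinAlgEquiv'_apply]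

lemma maxGen_le_exp (M : Matrix ι ι ℂ) (μ : ℂ) :
    Module.End.maxGenEigenspace (Matrix.toLinAlgEquiv' M) μ
      ≤ Module.End.maxGenEigenspace (Matrix.toLinAlgEquiv' (NormedSpace.exp M))
          (Complex.exp μ) := by
  intro v hv
  rw [mem_maxGen_iff] at hv ⊢
  obtain ⟨k, hk⟩ := hv
  exact ⟨k, (key_lemma M μ k v hk).1⟩

lemma spectrum_of_maxGen_ne_bot {M : Matrix ι ι ℂ} {μ : ℂ} {v : ι → ℂ} (hv0 : v ≠ 0)
    (hv : v ∈ Module.End.maxGenEigenspace (Matrix.toLinAlgEquiv' M) μ) :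
    μ ∈ spectrum ℂ M := by
  rw [← AlgEquiv.spectrum_eq (Matrix.toLinAlgEquiv' (R := ℂ) (n := ι)) M]
  set f := Matrix.toLinAlgEquiv' M
  obtain ⟨k, hk⟩ := Module.End.mem_maxGenEigenspace _ _ _ |>.mp hv
  have hne : Module.End.HasGenEigenvalue f μ k := by
    rw [Module.End.HasGenEigenvalue, Module.End.HasUnifEigenvalue]
    refine Submodule.ne_bot_iff _ |>.mpr ⟨v, ?_, hv0⟩
    rw [Module.End.mem_genEigenspace_nat]
    exact hk
  exact (Module.End.hasEigenvalue_of_hasGenEigenvalue hne).mem_spectrum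

/-- Injectivity of `exp` on matrices with spectrum in the horizontal strip. -/
theorem exp_injective_strip (A B : Matrix ι ι ℂ)
    (hA : ∀ z ∈ spectrum ℂ A, -Real.pi < z.im ∧ z.im < Real.pi)
    (hB : ∀ z ∈ spectrum ℂ B, -Real.pi < z.im ∧ z.im < Real.pi)
    (hexp : NormedSpace.exp A = NormedSpace.exp B) : A = B := by
  apply Matrix.toLinAlgEquiv'.injective
  set f := Matrix.toLinAlgEquiv' A with hf
  set g := Matrix.toLinAlgEquiv' B with hg
  set x := Matrix.toLinAlgEquiv' (NormedSpace.exp A) with hx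
  apply LinearMap.ext; intro v
  have hv : v ∈ ⨆ μ : ℂ, Module.End.maxGenEigenspace f μ := by
    rw [Module.End.iSup_maxGenEigenspace_eq_top f]; trivial
  refine Submodule.iSup_induction _ (motive := fun w => f w = g w) hv ?_ (by simp) ?_
  · -- main case
    intro μ v hvf
    by_cases hv0 : v = 0
    · simp [hv0]
    have hμspec : μ ∈ spectrum ℂ A := spectrum_of_maxGen_ne_bot hv0 hvf
    have hμstrip := hA μ hμspec
    -- v lies in the generalized eigenspace of B for μ as well
    have hvg : v ∈ Module.End.maxGenEigenspace g μ := by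
      have hvx : v ∈ Module.End.maxGenEigenspace x (Complex.exp μ) := maxGen_le_exp A μ hvf
      have hgx : ∀ μ' : ℂ, Module.End.maxGenEigenspace g μ'
          ≤ Module.End.maxGenEigenspace x (Complex.exp μ') := by
        intro μ'
        have := maxGen_le_exp B μ'
        rwa [← hexp] at this
      set good := ⨆ μ' ∈ {μ' : ℂ | Complex.exp μ' = Complex.exp μ},
        Module.End.maxGenEigenspace g μ' with hgood
      set bad := ⨆ μ' ∈ {μ' : ℂ | Complex.exp μ' ≠ Complex.exp μ},
        Module.End.maxGenEigenspace g μ' with hbad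
      have hsplit : (⊤ : Submodule ℂ (ι → ℂ)) ≤ good ⊔ bad := by
        rw [← Module.End.iSup_maxGenEigenspace_eq_top g]
        refine iSup_le fun μ' => ?_
        by_cases hc : Complex.exp μ' = Complex.exp μ
        · exact le_sup_of_le_left (le_biSup _ hc)
        · exact le_sup_of_le_right (le_biSup _ hc)
      obtain ⟨a, ha, b, hb, hab⟩ := Submodule.mem_sup.mp (hsplit (Submodule.mem_top (x := v)))
      have hgoodx : good ≤ Module.End.maxGenEigenspace x (Complex.exp μ) := by
        refine iSup_le fun μ' => iSup_le fun hc => ?_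
        exact le_trans (hgx μ') (by rw [hc])
      have hbadx : bad ≤ ⨆ lam ∈ {lam : ℂ | lam ≠ Complex.exp μ},
          Module.End.maxGenEigenspace x lam := by
        refine iSup_le fun μ' => iSup_le fun hc => ?_
        exact le_trans (hgx μ') (le_biSup _ hc)
      have hbmem : b ∈ Module.End.maxGenEigenspace x (Complex.exp μ) := by
        have hb' : b = v - a := by rw [← hab]; abel
        rw [hb']
        exact Submodule.sub_mem _ hvx (hgoodx ha)
      have hdisj := (Module.End.independent_maxGenEigenspace x).disjoint_biSup
        (show Complex.exp μ ∉ {lam : ℂ | lam ≠ Complex.exp μ} by simp)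
      have hb0 : b = 0 := by
        have hmem : b ∈ (⊥ : Submodule ℂ (ι → ℂ)) := hdisj.le_bot ⟨hbmem, hbadx hb⟩
        simpa using hmem
      have hva : v = a := by rw [← hab, hb0, add_zero]
      have hgood_le : good ≤ Module.End.maxGenEigenspace g μ := by
        refine iSup_le fun μ' => iSup_le fun hc => ?_
        by_cases hbot : Module.End.maxGenEigenspace g μ' = ⊥
        · rw [hbot]; exact bot_le
        · obtain ⟨w, hw, hw0⟩ := Submodule.exists_mem_ne_zero_of_ne_bot hbot
          have hμ'spec : μ' ∈ spectrum ℂ B := spectrum_of_maxGen_ne_bot hw0 hw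
          rw [strip_inj hμstrip (hB μ' hμ'spec) hc]
      exact hgood_le (hva ▸ ha)
    -- extract uniform nilpotency exponent and conclude
    obtain ⟨k1, hk1⟩ := (mem_maxGen_iff A μ v).mp hvf
    obtain ⟨k2, hk2⟩ := (mem_maxGen_iff B μ v).mp hvg
    have hA1 : ((A - μ • 1) ^ (max k1 k2)) *ᵥ v = 0 := kill_upgrade hk1 (le_max_left _ _)
    have hB1 : ((B - μ • 1) ^ (max k1 k2)) *ᵥ v = 0 := kill_upgrade hk2 (le_max_right _ _)
    have e1 := (key_lemma A μ (max k1 k2) v hA1).2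
    have e2 := (key_lemma B μ (max k1 k2) v hB1).2
    rw [← hexp] at e2
    show f v = g v
    rw [hf, hg, Matrix.toLinAlgEquiv'_apply, Matrix.toLinAlgEquiv'_apply, e1, e2]
  · intro w₁ w₂ h1 h2
    simp [map_add, h1, h2]

end MatrixAnalysis

section Dual

variable {m : ℕ}

lemma Z_mul_Z : Zmat m * Zmat m = -1 := by
  rw [Zmat, Matrix.fromBlocks_multiply]
  have h : (-1 : Matrix (Fin m ⊕ Fin m) (Fin m ⊕ Fin m) ℂ)
      = Matrix.fromBlocks (-1) (-0) (-0) (-1) := by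
    rw [← Matrix.fromBlocks_neg, Matrix.fromBlocks_one]
  rw [h]
  simp

/-- `-Z` as a unit, with inverse `Z`. -/
noncomputable def Zunit (m : ℕ) : (Matrix (Fin m ⊕ Fin m) (Fin m ⊕ Fin m) ℂ)ˣ where
  val := -(Zmat m)
  inv := Zmat m
  val_inv := by rw [neg_mul, Z_mul_Z]; simp
  inv_val := by rw [mul_neg, Z_mul_Z]; simp

lemma Zunit_val : (Zunit m).val = -(Zmat m) := rfl

lemma Zunit_inv_val : ((Zunit m)⁻¹).val = Zmat m := rfl

lemma dual_eq_conj (M : Matrix (Fin m ⊕ Fin m) (Fin m ⊕ Fin m) ℂ) :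
    dual M = (Zunit m).val * Mᵀ * ((Zunit m)⁻¹).val := by
  rw [Zunit_val, Zunit_inv_val, dual]
  simp [neg_mul]

lemma exp_dual (M : Matrix (Fin m ⊕ Fin m) (Fin m ⊕ Fin m) ℂ) :
    NormedSpace.exp (dual M) = dual (NormedSpace.exp M) := by
  rw [dual_eq_conj, dual_eq_conj, Matrix.exp_units_conj, Matrix.exp_transpose]

lemma isUnit_dual_iff (M : Matrix (Fin m ⊕ Fin m) (Fin m ⊕ Fin m) ℂ) :
    IsUnit (dual M) ↔ IsUnit M := by
  rw [dual_eq_conj, Units.isUnit_mul_units, Units.isUnit_units_mul,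
    Matrix.isUnit_iff_isUnit_det, Matrix.det_transpose, ← Matrix.isUnit_iff_isUnit_det]

lemma dual_sub (A B : Matrix (Fin m ⊕ Fin m) (Fin m ⊕ Fin m) ℂ) :
    dual (A - B) = dual A - dual B := by
  simp only [dual, Matrix.transpose_sub, Matrix.sub_mul, Matrix.mul_sub, neg_sub]
  abel

lemma dual_smul_one (z : ℂ) : dual (z • (1 : Matrix (Fin m ⊕ Fin m) (Fin m ⊕ Fin m) ℂ))
    = z • 1 := by
  rw [dual, Matrix.transpose_smul, Matrix.transpose_one, Matrix.mul_smul, Matrix.mul_one,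
    Matrix.smul_mul, Z_mul_Z]
  simp

lemma spectrum_dual (M : Matrix (Fin m ⊕ Fin m) (Fin m ⊕ Fin m) ℂ) :
    spectrum ℂ (dual M) = spectrum ℂ M := by
  ext z
  rw [spectrum.mem_iff, spectrum.mem_iff]
  have h : algebraMap ℂ _ z - dual M = dual (algebraMap ℂ _ z - M) := by
    rw [dual_sub]
    congr 1
    rw [Algebra.algebraMap_eq_smul_one, dual_smul_one]
  rw [h, isUnit_dual_iff]

end Dual

/-- If `X` is self-dual and has no eigenvalue on `(-∞, 0]`, and `L` is its
principal logarithm, then `L` is self-dual. -/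
theorem principal_log_of_selfDual_is_selfDual
    (m : ℕ) (X L : Matrix (Fin m ⊕ Fin m) (Fin m ⊕ Fin m) ℂ)
    (hspec : ∀ z ∈ spectrum ℂ X, ¬ (z.im = 0 ∧ z.re ≤ 0))
    (hexp : NormedSpace.exp L = X)
    (hstrip : ∀ z ∈ spectrum ℂ L, -Real.pi < z.im ∧ z.im < Real.pi)
    (hdual : dual X = X) :
    dual L = L := by
  have h1 : NormedSpace.exp (dual L) = NormedSpace.exp L := by
    rw [exp_dual, hexp, hdual, ← hexp]
  have h2 : ∀ z ∈ spectrum ℂ (dual L), -Real.pi < z.im ∧ z.im < Real.pi := by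
    intro z hz
    rw [spectrum_dual] at hz
    exact hstrip z hz
  exact exp_injective_strip (dual L) L h2 hstrip h1
end

section
/- Let X be an n-by-n complex matrix with no eigenvalue on the closed negative real axis (-infinity, 0], and let R be the principal square root of X, i.e. R² = X and every eigenvalue of R has strictly positive real part. If X is unitary (X† X = I), then R is unitary. -/
open Matrix Polynomial

private lemma matrix_mem_spec_iff_det {m : ℕ} (M : Matrix (Fin m) (Fin m) ℂ) (z : ℂ) :
    z ∈ spectrum ℂ M ↔ ¬ IsUnit (z • (1 : Matrix (Fin m) (Fin m) ℂ) - M) := by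
  rw [spectrum.mem_iff, Algebra.algebraMap_eq_smul_one]

private lemma matrix_root_charpoly_mem_spec {m : ℕ} (M : Matrix (Fin m) (Fin m) ℂ) (z : ℂ)
    (h : M.charpoly.eval z = 0) : z ∈ spectrum ℂ M := by
  rw [Matrix.charpoly, eval_det, matPolyEquiv_charmatrix, eval_sub, eval_X, eval_C] at h
  rw [matrix_mem_spec_iff_det, Matrix.isUnit_iff_isUnit_det, isUnit_iff_ne_zero, not_not]
  rw [Matrix.smul_one_eq_diagonal, ← Matrix.scalar_apply]
  exact h

private lemma pow_comm_aux {m : ℕ} (S T Y : Matrix (Fin m) (Fin m) ℂ)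
    (h : S * Y = Y * T) : ∀ k : ℕ, S ^ k * Y = Y * T ^ k := by
  intro k
  induction k with
  | zero => simp
  | succ k ih =>
      rw [pow_succ, pow_succ, mul_assoc, h, ← mul_assoc, ih, mul_assoc]

private lemma aeval_comm_aux {m : ℕ} (S T Y : Matrix (Fin m) (Fin m) ℂ)
    (h : S * Y = Y * T) (p : ℂ[X]) : (aeval S p) * Y = Y * (aeval T p) := by
  induction p using Polynomial.induction_on' with
  | add p q hp hq => rw [map_add, map_add, add_mul, mul_add, hp, hq]
  | monomial k a =>
      rw [aeval_monomial, aeval_monomial, mul_assoc, pow_comm_aux S T Y h k, ← mul_assoc,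
        Algebra.commutes a Y, mul_assoc]

/-- If `X` is unitary with no eigenvalue on `(-∞, 0]`, and `R` is its principal
square root (`R² = X` with every eigenvalue of `R` having strictly positive real part), then `R`
is unitary. -/
theorem principal_sqrt_of_unitary_is_unitary
    (n : ℕ) (X R : Matrix (Fin n) (Fin n) ℂ)
    (hspec : ∀ z ∈ spectrum ℂ X, ¬ (z.im = 0 ∧ z.re ≤ 0))
    (hsq : R * R = X)
    (hre : ∀ z ∈ spectrum ℂ R, 0 < z.re)
    (hunitary : Xᴴ * X = 1) :
    Rᴴ * R = 1 := by
  -- `R` is invertible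
  have hRu : IsUnit R := by
    by_contra h
    exact absurd (hre 0 ((spectrum.zero_mem_iff ℂ).mpr h)) (by simp)
  have hRHu : IsUnit (Rᴴ) := by
    rw [Matrix.isUnit_iff_isUnit_det, Matrix.det_conjTranspose, isUnit_iff_ne_zero]
    simpa using isUnit_iff_ne_zero.mp ((Matrix.isUnit_iff_isUnit_det R).mp hRu)
  obtain ⟨u, hu⟩ := hRHu
  set S : Matrix (Fin n) (Fin n) ℂ := (Rᴴ)⁻¹ with hSdef
  have hSu : S = (↑u⁻¹ : Matrix (Fin n) (Fin n) ℂ) := by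
    rw [hSdef, ← hu, Matrix.coe_units_inv]
  have hRS : Rᴴ * S = 1 := by
    rw [hSu, ← hu]; exact u.mul_inv
  have hSR : S * Rᴴ = 1 := mul_eq_one_comm.mp hRS
  -- `S * S = X`
  have hSS : S * S = X := by
    rw [hSdef, ← Matrix.mul_inv_rev, ← Matrix.conjTranspose_mul, hsq]
    exact Matrix.inv_eq_right_inv hunitary
  -- every element of the spectrum of `S` has positive real part
  have hSspec : ∀ z ∈ spectrum ℂ S, 0 < z.re := by
    intro z hz
    have hz0 : z ≠ 0 := by
      intro h
      subst h
      have : ¬ IsUnit S := (spectrum.zero_mem_iff ℂ).mp hz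
      exact this (hSu ▸ (u⁻¹).isUnit)
    have hzinv : z⁻¹ ∈ spectrum ℂ (↑u : Matrix (Fin n) (Fin n) ℂ) := by
      have := hSu ▸ hz
      rw [← inv_inv z] at this
      exact spectrum.inv₀_mem_inv_iff.mp this
    rw [hu] at hzinv
    have hstar : (starRingEnd ℂ) z⁻¹ ∈ spectrum ℂ R := by
      have : Rᴴ = star R := rfl
      rw [this, spectrum.map_star] at hzinv
      exact hzinv
    have := hre _ hstar
    rw [Complex.conj_re, Complex.inv_re] at this
    have hnormSq : 0 < Complex.normSq z := Complex.normSq_pos.mpr hz0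
    calc 0 < z.re / Complex.normSq z * Complex.normSq z := by positivity
    _ = z.re := by field_simp
  -- Sylvester argument: `S = R`
  set Y : Matrix (Fin n) (Fin n) ℂ := S - R with hYdef
  have hcomm : S * Y = Y * (-R) := by
    rw [hYdef]
    rw [mul_sub, sub_mul, mul_neg, mul_neg, hsq, ← hSS]
    abel
  set p : ℂ[X] := S.charpoly with hpdef
  have hY0 : Y * (aeval (-R) p) = 0 := by
    rw [← aeval_comm_aux S (-R) Y hcomm p, hpdef, Matrix.aeval_self_charpoly, zero_mul]
  have hUnit : IsUnit (aeval (-R) p) := by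
    have hmonic : p.Monic := Matrix.charpoly_monic S
    have hsplit : p.Splits := IsAlgClosed.splits p
    set l : List ℂ := p.roots.toList with hl
    have hlcoe : (l : Multiset ℂ) = p.roots := Multiset.coe_toList _
    have hprod : p = (l.map fun a => Polynomial.X - C a).prod := by
      have h1 : p = (p.roots.map fun a => Polynomial.X - C a).prod :=
        hsplit.eq_prod_roots_of_monic hmonic
      rw [h1, ← hlcoe, Multiset.map_coe, Multiset.prod_coe]
    have hmap : aeval (-R) p = (l.map fun a => aeval (-R) (Polynomial.X - C a)).prod := by
      conv_lhs => rw [hprod]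
      rw [map_list_prod (aeval (-R) : ℂ[X] →ₐ[ℂ] _) _, List.map_map]
      rfl
    rw [hmap]
    refine List.prod_isUnit ?_
    intro A hA
    rw [List.mem_map] at hA
    obtain ⟨a, ha, rfl⟩ := hA
    have ha : a ∈ p.roots := by rw [← hlcoe] at *; exact ha
    have haS : a ∈ spectrum ℂ S :=
      matrix_root_charpoly_mem_spec S a ((Polynomial.mem_roots hmonic.ne_zero).mp ha)
    have hare : 0 < a.re := hSspec a haS
    -- show the factor is a unit
    by_contra hnu
    have : (-a) ∈ spectrum ℂ R := by
      rw [matrix_mem_spec_iff_det]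
      intro hU
      apply hnu
      simpa [Function.comp, map_sub, aeval_X, aeval_C, Algebra.algebraMap_eq_smul_one,
        neg_smul, sub_eq_add_neg, add_comm, neg_add] using hU.neg.neg
    have := hre _ this
    simp only [Complex.neg_re] at this
    linarith
  obtain ⟨v, hv⟩ := hUnit
  have hYzero : Y = 0 := by
    calc Y = Y * (↑v * ↑v⁻¹) := by rw [Units.mul_inv, mul_one]
    _ = (Y * ↑v) * ↑v⁻¹ := by rw [mul_assoc]
    _ = 0 := by rw [hv, hY0, zero_mul]
  have hSeqR : S = R := sub_eq_zero.mp hYzero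
  rw [hSeqR] at hRS
  exact hRS
end

section
/- Let X be an n-by-n complex matrix with no eigenvalue on the closed negative real axis (-infinity, 0], and let R be the principal square root of X, i.e. R² = X and every eigenvalue of R has strictly positive real part. If X is complex symmetric (Xᵀ = X), then R is complex symmetric: Rᵀ = R. -/
open Matrix Polynomial

lemma eval_charpoly_aux {n : ℕ} (A : Matrix (Fin n) (Fin n) ℂ) (z : ℂ) :
    A.charpoly.eval z = (Matrix.scalar (Fin n) z - A).det := by
  rw [Matrix.charpoly, eval_det, matPolyEquiv_charmatrix]
  simp

lemma mem_spectrum_iff_root {n : ℕ} (A : Matrix (Fin n) (Fin n) ℂ) (z : ℂ) :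
    z ∈ spectrum ℂ A ↔ A.charpoly.IsRoot z := by
  rw [spectrum.mem_iff, Matrix.isUnit_iff_isUnit_det, isUnit_iff_ne_zero,
    not_ne_iff, IsRoot, eval_charpoly_aux]
  rfl

lemma spectrum_transpose {n : ℕ} (A : Matrix (Fin n) (Fin n) ℂ) :
    spectrum ℂ Aᵀ = spectrum ℂ A := by
  ext z
  rw [mem_spectrum_iff_root, mem_spectrum_iff_root, IsRoot, IsRoot,
    eval_charpoly_aux, eval_charpoly_aux, ← Matrix.det_transpose (Matrix.scalar (Fin n) z - A)]
  simp [Matrix.transpose_sub]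

lemma sylvester_zero {n : ℕ} (A B M : Matrix (Fin n) (Fin n) ℂ)
    (h : A * M = M * B) (hd : ∀ z ∈ spectrum ℂ A, z ∉ spectrum ℂ B) : M = 0 := by
  rcases Nat.eq_zero_or_pos n with hn | hn
  · subst hn; ext i; exact absurd i.2 (by omega)
  have key : ∀ p : ℂ[X], aeval A p * M = M * aeval B p := by
    intro p
    induction p using Polynomial.induction_on with
    | C a => simp [Algebra.algebraMap_eq_smul_one, Matrix.smul_mul, Matrix.mul_smul]
    | add p q hp hq => simp [mul_add, add_mul, hp, hq]
    | monomial k a hk =>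
      have : aeval A (C a * X ^ (k + 1)) = aeval A (C a * X ^ k) * A := by
        simp [pow_succ, mul_assoc]
      rw [this, mul_assoc, h, ← mul_assoc, hk, mul_assoc]
      congr 1
      simp [pow_succ, mul_assoc]
  have hzero : aeval A B.charpoly * M = 0 := by
    rw [key, Matrix.aeval_self_charpoly, mul_zero]
  have hunit : IsUnit (aeval A B.charpoly) := by
    by_contra hnu
    have h0 : (0 : ℂ) ∈ spectrum ℂ (aeval A B.charpoly) := by
      rw [spectrum.mem_iff]
      simpa using hnu
    have hdeg : 0 < B.charpoly.degree := by
      rw [Matrix.charpoly_degree_eq_dim]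
      simp only [Fintype.card_fin]
      exact_mod_cast hn
    rw [spectrum.map_polynomial_aeval_of_degree_pos A B.charpoly hdeg] at h0
    obtain ⟨z, hz, hez⟩ := h0
    exact hd z hz ((mem_spectrum_iff_root B z).2 hez)
  calc M = ↑hunit.unit⁻¹ * ((aeval A) B.charpoly * M) := by
          rw [← mul_assoc, IsUnit.val_inv_mul, one_mul]
    _ = 0 := by rw [hzero, mul_zero]

/-- If `X` is complex symmetric with no eigenvalue on `(-∞, 0]`, and `R` is its
principal square root, then `R` is complex symmetric. -/
theorem principal_sqrt_of_symmetric_is_symmetric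
    (n : ℕ) (X R : Matrix (Fin n) (Fin n) ℂ)
    (hspec : ∀ z ∈ spectrum ℂ X, ¬ (z.im = 0 ∧ z.re ≤ 0))
    (hsq : R * R = X)
    (hre : ∀ z ∈ spectrum ℂ R, 0 < z.re)
    (hsymm : Xᵀ = X) :
    Rᵀ = R := by
  have hsq' : Rᵀ * Rᵀ = X := by
    rw [← Matrix.transpose_mul, hsq, hsymm]
  have hcomm : Rᵀ * (Rᵀ - R) = (Rᵀ - R) * (-R) := by
    rw [mul_sub, sub_mul, hsq', mul_neg, mul_neg, hsq]
    abel
  have hdisj : ∀ z ∈ spectrum ℂ Rᵀ, z ∉ spectrum ℂ (-R) := by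
    intro z hz hz'
    rw [spectrum_transpose] at hz
    have h1 : 0 < z.re := hre z hz
    have h2 : -z ∈ spectrum ℂ R := by
      rw [← spectrum.neg_eq] at hz'
      simpa using hz'
    have := hre _ h2
    simp only [Complex.neg_re] at this
    linarith
  have := sylvester_zero Rᵀ (-R) (Rᵀ - R) hcomm hdisj
  exact sub_eq_zero.mp this
end

section
/- Let X be an n-by-n complex matrix with no eigenvalue on the closed negative real axis (-infinity, 0], and let R be the principal square root of X, i.e. R² = X and every eigenvalue of R has strictly positive real part. If every entry of X is real, then every entry of R is real. -/
open Matrix Polynomial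

private lemma matrix_conj_isUnit_iff {n : ℕ} (M : Matrix (Fin n) (Fin n) ℂ) :
    IsUnit (M.map (starRingEnd ℂ)) ↔ IsUnit M := by
  rw [Matrix.isUnit_iff_isUnit_det, Matrix.isUnit_iff_isUnit_det,
    ← RingHom.mapMatrix_apply, ← RingHom.map_det,
    isUnit_iff_ne_zero, isUnit_iff_ne_zero, ne_eq, ne_eq, _root_.map_eq_zero]

private lemma mem_spectrum_conj {n : ℕ} (M : Matrix (Fin n) (Fin n) ℂ) (z : ℂ) :
    z ∈ spectrum ℂ (M.map (starRingEnd ℂ)) ↔ (starRingEnd ℂ) z ∈ spectrum ℂ M := by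
  rw [spectrum.mem_iff, spectrum.mem_iff, not_iff_not]
  have h : algebraMap ℂ (Matrix (Fin n) (Fin n) ℂ) z - M.map (starRingEnd ℂ)
      = ((algebraMap ℂ (Matrix (Fin n) (Fin n) ℂ) ((starRingEnd ℂ) z) - M).map
          (starRingEnd ℂ)) := by
    ext i j
    simp only [Matrix.sub_apply, Matrix.map_apply, Matrix.algebraMap_matrix_apply, map_sub]
    split_ifs <;> simp
  rw [h, matrix_conj_isUnit_iff]

private lemma aeval_mul_comm {n : ℕ} {A B D : Matrix (Fin n) (Fin n) ℂ}
    (h : A * D = D * B) (p : ℂ[X]) :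
    (aeval A p) * D = D * (aeval B p) := by
  have hpow : ∀ k : ℕ, A ^ k * D = D * B ^ k := by
    intro k
    induction k with
    | zero => simp
    | succ k ih => rw [pow_succ, pow_succ, ← mul_assoc, ← ih, mul_assoc, h, ← mul_assoc]
  induction p using Polynomial.induction_on' with
  | add p q hp hq => rw [map_add, map_add, add_mul, mul_add, hp, hq]
  | monomial k c =>
      rw [aeval_monomial, aeval_monomial, mul_assoc, hpow k, ← mul_assoc,
        Algebra.commutes c D, mul_assoc]

private lemma root_charpoly_mem_spectrum {n : ℕ} (M : Matrix (Fin n) (Fin n) ℂ) (μ : ℂ)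
    (h : (Matrix.charpoly M).eval μ = 0) : μ ∈ spectrum ℂ M := by
  rw [spectrum.mem_iff, Matrix.isUnit_iff_isUnit_det, isUnit_iff_ne_zero, ne_eq, not_not]
  have hdet : (algebraMap ℂ (Matrix (Fin n) (Fin n) ℂ) μ - M).det
      = (Matrix.charpoly M).eval μ := by
    rw [Matrix.charpoly, ← Polynomial.coe_evalRingHom, RingHom.map_det]
    congr 1
    ext i j
    by_cases hij : i = j
    · subst hij
      simp [Matrix.charmatrix_apply_eq, Matrix.algebraMap_matrix_apply]
    · simp [Matrix.charmatrix_apply_ne _ _ _ hij, Matrix.algebraMap_matrix_apply, hij]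
  rw [hdet, h]

/-- If `X` has real entries and no eigenvalue on `(-∞, 0]`, and `R` is its
principal square root, then `R` has real entries. -/
theorem principal_sqrt_of_real_is_real
    (n : ℕ) (X R : Matrix (Fin n) (Fin n) ℂ)
    (hspec : ∀ z ∈ spectrum ℂ X, ¬ (z.im = 0 ∧ z.re ≤ 0))
    (hsq : R * R = X)
    (hre : ∀ z ∈ spectrum ℂ R, 0 < z.re)
    (hreal : ∀ i j, (starRingEnd ℂ) (X i j) = X i j) :
    ∀ i j, (starRingEnd ℂ) (R i j) = R i j := by
  rcases Nat.eq_zero_or_pos n with hn | hn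
  · intro i j
    exact absurd i.isLt (by omega)
  set S : Matrix (Fin n) (Fin n) ℂ := R.map (starRingEnd ℂ) with hSdef
  have hSsq : S * S = R * R := by
    ext a b
    calc (S * S) a b = ∑ k, (starRingEnd ℂ) (R a k) * (starRingEnd ℂ) (R k b) := by
          simp [hSdef, Matrix.mul_apply]
      _ = (starRingEnd ℂ) (∑ k, R a k * R k b) := by rw [map_sum]; simp
      _ = (starRingEnd ℂ) ((R * R) a b) := by rw [Matrix.mul_apply]
      _ = (R * R) a b := by rw [hsq]; exact hreal a b
  set D : Matrix (Fin n) (Fin n) ℂ := R - S with hDdef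
  have hcomm : R * D = D * (-S) := by
    calc R * D = R * R - R * S := by rw [hDdef, mul_sub]
      _ = S * S - R * S := by rw [hSsq]
      _ = D * (-S) := by
          rw [hDdef, sub_mul, mul_neg, mul_neg, sub_neg_eq_add, neg_add_eq_sub]
  have hkey : D * (aeval (-S) (Matrix.charpoly R)) = 0 := by
    rw [← aeval_mul_comm hcomm, Matrix.aeval_self_charpoly, zero_mul]
  have hdeg : 0 < (Matrix.charpoly R).degree := by
    rw [Matrix.charpoly_degree_eq_dim]
    simpa using hn
  have hunit : IsUnit (aeval (-S) (Matrix.charpoly R)) := by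
    by_contra hcon
    have h0 : (0 : ℂ) ∈ spectrum ℂ (aeval (-S) (Matrix.charpoly R)) :=
      (spectrum.zero_mem_iff ℂ).mpr hcon
    rw [spectrum.map_polynomial_aeval_of_degree_pos (-S) (Matrix.charpoly R) hdeg] at h0
    obtain ⟨μ, hμmem, hμ0⟩ := h0
    have hμR : μ ∈ spectrum ℂ R := root_charpoly_mem_spectrum R μ hμ0
    have hpos : 0 < μ.re := hre μ hμR
    have hnegmem : -μ ∈ spectrum ℂ S := by
      rw [← spectrum.neg_eq] at hμmem
      exact Set.mem_neg.mp hμmem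
    have : (starRingEnd ℂ) (-μ) ∈ spectrum ℂ R := (mem_spectrum_conj R (-μ)).mp hnegmem
    have hneg : 0 < ((starRingEnd ℂ) (-μ)).re := hre _ this
    simp only [map_neg, Complex.neg_re, Complex.conj_re] at hneg
    linarith
  have hD0 : D = 0 := by
    have h2 : D * aeval (-S) (Matrix.charpoly R) = 0 * aeval (-S) (Matrix.charpoly R) := by
      rw [hkey, zero_mul]
    exact hunit.mul_right_cancel h2
  have hRS : R = S := by
    have := sub_eq_zero.mp hD0
    exact this
  intro i j
  conv_rhs => rw [hRS]
  simp [hSdef]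
end

section
/- Let Y and Z be n-by-n complex matrices such that I + 3ZY is invertible, and set Y' = (1/3) Y (I + 8 (I + 3ZY)⁻¹) and Z' = (1/3) (I + 8 (I + 3ZY)⁻¹) Z. If Y and Z are unitary, then Y' and Z' are unitary. -/
open Matrix

/-- The square-root iteration step
`Y' = (1/3) Y (I + 8 (I + 3ZY)⁻¹)`, `Z' = (1/3) (I + 8 (I + 3ZY)⁻¹) Z`
preserves unitarity. -/
theorem iteration_step_preserves_unitary
    (n : ℕ) (Y Z : Matrix (Fin n) (Fin n) ℂ)
    (hinv : IsUnit (1 + (3 : ℂ) • (Z * Y)))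
    (Y' Z' : Matrix (Fin n) (Fin n) ℂ)
    (hY' : Y' = (3 : ℂ)⁻¹ • (Y * (1 + (8 : ℂ) • (1 + (3 : ℂ) • (Z * Y))⁻¹)))
    (hZ' : Z' = (3 : ℂ)⁻¹ • ((1 + (8 : ℂ) • (1 + (3 : ℂ) • (Z * Y))⁻¹) * Z))
    (hYu : Yᴴ * Y = 1) (hZu : Zᴴ * Z = 1) :
    Y'ᴴ * Y' = 1 ∧ Z'ᴴ * Z' = 1 := by
  set U : Matrix (Fin n) (Fin n) ℂ := Z * Y with hUdef
  set A : Matrix (Fin n) (Fin n) ℂ := 1 + (3 : ℂ) • U with hAdef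
  set B : Matrix (Fin n) (Fin n) ℂ := 1 + (8 : ℂ) • A⁻¹ with hBdef
  clear_value U A B
  have hUu : Uᴴ * U = 1 := by
    rw [hUdef, conjTranspose_mul, Matrix.mul_assoc, ← Matrix.mul_assoc Zᴴ, hZu,
      Matrix.one_mul, hYu]
  have hAdet : IsUnit A.det := (Matrix.isUnit_iff_isUnit_det A).mp hinv
  have hAHdet : IsUnit Aᴴ.det := (Matrix.isUnit_iff_isUnit_det Aᴴ).mp
    ((Matrix.isUnit_conjTranspose A).mpr hinv)
  have hA1 : A * A⁻¹ = 1 := Matrix.mul_nonsing_inv A hAdet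
  have hA2 : A⁻¹ * A = 1 := Matrix.nonsing_inv_mul A hAdet
  have hAH1 : Aᴴ * (Aᴴ)⁻¹ = 1 := Matrix.mul_nonsing_inv _ hAHdet
  have hAH2 : (Aᴴ)⁻¹ * Aᴴ = 1 := Matrix.nonsing_inv_mul _ hAHdet
  have hBH : Bᴴ = 1 + (8 : ℂ) • (Aᴴ)⁻¹ := by
    rw [hBdef]
    simp [Matrix.conjTranspose_nonsing_inv]
  have hAHconj : Aᴴ = 1 + (3 : ℂ) • Uᴴ := by
    rw [hAdef]; simp
  have key : Aᴴ * A = (8 : ℂ) • 1 + Aᴴ + A := by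
    rw [hAHconj, hAdef]
    simp only [add_mul, mul_add, Matrix.one_mul, Matrix.mul_one, smul_mul_assoc,
      mul_smul_comm, smul_smul, hUu]
    module
  have hBA : B * A = A + (8 : ℂ) • 1 := by
    rw [hBdef, add_mul, Matrix.one_mul, smul_mul_assoc, hA2]
  have hAHB : Aᴴ * Bᴴ = Aᴴ + (8 : ℂ) • 1 := by
    rw [hBH, mul_add, Matrix.mul_one, mul_smul_comm, hAH1]
  have h1 : Aᴴ * (Bᴴ * B) * A = (9 : ℂ) • (Aᴴ * A) := by
    have hassoc : Aᴴ * (Bᴴ * B) * A = (Aᴴ * Bᴴ) * (B * A) := by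
      simp only [Matrix.mul_assoc]
    rw [hassoc, hAHB, hBA]
    simp only [add_mul, mul_add, Matrix.one_mul, Matrix.mul_one, smul_mul_assoc,
      mul_smul_comm, smul_smul, key]
    module
  have main : Bᴴ * B = (9 : ℂ) • 1 := by
    calc Bᴴ * B = ((Aᴴ)⁻¹ * Aᴴ) * (Bᴴ * B) * (A * A⁻¹) := by
          rw [hAH2, hA1, Matrix.one_mul, Matrix.mul_one]
      _ = (Aᴴ)⁻¹ * (Aᴴ * (Bᴴ * B) * A) * A⁻¹ := by simp only [Matrix.mul_assoc]
      _ = (Aᴴ)⁻¹ * ((9 : ℂ) • (Aᴴ * A)) * A⁻¹ := by rw [h1]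
      _ = (9 : ℂ) • (((Aᴴ)⁻¹ * Aᴴ) * (A * A⁻¹)) := by
          simp only [mul_smul_comm, smul_mul_assoc, Matrix.mul_assoc]
      _ = (9 : ℂ) • 1 := by rw [hAH2, hA1, Matrix.one_mul]
  have h9 : (starRingEnd ℂ) (3 : ℂ)⁻¹ * (3 : ℂ)⁻¹ * 9 = 1 := by
    simp [map_inv₀, Complex.conj_ofNat]
    norm_num
  constructor
  · rw [hY', conjTranspose_smul, smul_mul_assoc, Matrix.mul_smul, smul_smul,
      conjTranspose_mul, Matrix.mul_assoc, ← Matrix.mul_assoc Yᴴ, hYu, Matrix.one_mul,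
      main, smul_smul]
    rw [Complex.star_def, h9, one_smul]
  · rw [hZ', conjTranspose_smul, smul_mul_assoc, Matrix.mul_smul, smul_smul,
      conjTranspose_mul, Matrix.mul_assoc, ← Matrix.mul_assoc Bᴴ, main,
      smul_mul_assoc, Matrix.one_mul, Matrix.mul_smul, hZu, smul_smul]
    rw [Complex.star_def, h9, one_smul]
end

section
/- Let Y and Z be n-by-n complex matrices such that I + 3ZY is invertible, and set Y' = (1/3) Y (I + 8 (I + 3ZY)⁻¹) and Z' = (1/3) (I + 8 (I + 3ZY)⁻¹) Z. If Y and Z are complex symmetric (Yᵀ = Y and Zᵀ = Z), then Y' and Z' are complex symmetric. -/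
open Matrix

/-- The square-root iteration step
`Y' = (1/3) Y (I + 8 (I + 3ZY)⁻¹)`, `Z' = (1/3) (I + 8 (I + 3ZY)⁻¹) Z`
preserves complex symmetry. -/
theorem iteration_step_preserves_symmetric
    (n : ℕ) (Y Z : Matrix (Fin n) (Fin n) ℂ)
    (hinv : IsUnit (1 + (3 : ℂ) • (Z * Y)))
    (Y' Z' : Matrix (Fin n) (Fin n) ℂ)
    (hY' : Y' = (3 : ℂ)⁻¹ • (Y * (1 + (8 : ℂ) • (1 + (3 : ℂ) • (Z * Y))⁻¹)))
    (hZ' : Z' = (3 : ℂ)⁻¹ • ((1 + (8 : ℂ) • (1 + (3 : ℂ) • (Z * Y))⁻¹) * Z))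
    (hYs : Yᵀ = Y) (hZs : Zᵀ = Z) :
    Y'ᵀ = Y' ∧ Z'ᵀ = Z' := by
  set A : Matrix (Fin n) (Fin n) ℂ := 1 + (3 : ℂ) • (Z * Y) with hA
  set B : Matrix (Fin n) (Fin n) ℂ := 1 + (3 : ℂ) • (Y * Z) with hB
  have hAT : Aᵀ = B := by
    simp [hA, hB, transpose_add, transpose_smul, transpose_mul, hYs, hZs]
  have hBu : IsUnit B := by
    rw [← hAT]
    rw [isUnit_iff_isUnit_det] at hinv ⊢
    rwa [det_transpose]
  have hinvT : A⁻¹ᵀ = B⁻¹ := by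
    rw [← hAT, transpose_nonsing_inv]
  have hBY : B * Y = Y * A := by
    simp [hA, hB, add_mul, mul_add, mul_smul_comm, smul_mul_assoc, mul_assoc]
  have hdA : IsUnit A.det := (isUnit_iff_isUnit_det A).mp hinv
  have hdB : IsUnit B.det := (isUnit_iff_isUnit_det B).mp hBu
  have hYA : Y * A⁻¹ = B⁻¹ * Y := by
    have h := congrArg (fun M => B⁻¹ * M * A⁻¹) hBY
    simp only [mul_assoc] at h
    rw [Matrix.mul_nonsing_inv A hdA, mul_one, ← mul_assoc,
      Matrix.nonsing_inv_mul B hdB, one_mul] at h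
    exact h
  have hZA : A⁻¹ * Z = Z * B⁻¹ := by
    have hZB : Z * B = A * Z := by
      simp [hA, hB, add_mul, mul_add, mul_smul_comm, smul_mul_assoc, mul_assoc]
    have h := congrArg (fun M => A⁻¹ * M * B⁻¹) hZB
    simp only [mul_assoc] at h
    rw [Matrix.mul_nonsing_inv B hdB, mul_one, ← mul_assoc,
      Matrix.nonsing_inv_mul A hdA, one_mul] at h
    exact h
  constructor
  · rw [hY']
    rw [transpose_smul, transpose_mul, transpose_add, transpose_one,
      transpose_smul, hinvT, hYs]
    rw [mul_add, add_mul, mul_one, one_mul, mul_smul_comm, smul_mul_assoc, hYA]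
  · rw [hZ']
    rw [transpose_smul, transpose_mul, transpose_add, transpose_one,
      transpose_smul, hinvT, hZs]
    rw [mul_add, add_mul, mul_one, one_mul, mul_smul_comm, smul_mul_assoc, hZA]
end

section
/- Let Y and Z be 2m-by-2m complex matrices such that I + 3ZY is invertible, and set Y' = (1/3) Y (I + 8 (I + 3ZY)⁻¹) and Z' = (1/3) (I + 8 (I + 3ZY)⁻¹) Z. If Y and Z are self-dual (Y^♯ = Y and Z^♯ = Z), then Y' and Z' are self-dual. -/
open Matrix

lemma Zmat_sq (m : ℕ) : Zmat m * Zmat m = -1 := by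
  simp [Zmat, Matrix.fromBlocks_multiply, ← Matrix.fromBlocks_one, Matrix.fromBlocks_neg]

lemma dual_one (m : ℕ) : dual (1 : Matrix (Fin m ⊕ Fin m) (Fin m ⊕ Fin m) ℂ) = 1 := by
  simp [dual, Zmat_sq]

lemma dual_mul {m : ℕ} (A B : Matrix (Fin m ⊕ Fin m) (Fin m ⊕ Fin m) ℂ) :
    dual (A * B) = dual B * dual A := by
  simp only [dual, transpose_mul, neg_mul_neg]
  rw [show (Zmat m * Bᵀ * Zmat m) * (Zmat m * Aᵀ * Zmat m)
      = Zmat m * Bᵀ * (Zmat m * Zmat m) * (Aᵀ * Zmat m) by noncomm_ring, Zmat_sq]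
  noncomm_ring

lemma dual_add {m : ℕ} (A B : Matrix (Fin m ⊕ Fin m) (Fin m ⊕ Fin m) ℂ) :
    dual (A + B) = dual A + dual B := by
  simp only [dual, transpose_add, mul_add, add_mul]; abel

lemma dual_smul {m : ℕ} (c : ℂ) (A : Matrix (Fin m ⊕ Fin m) (Fin m ⊕ Fin m) ℂ) :
    dual (c • A) = c • dual A := by
  simp [dual, transpose_smul, smul_mul_assoc]

/-- The square-root iteration step
`Y' = (1/3) Y (I + 8 (I + 3ZY)⁻¹)`, `Z' = (1/3) (I + 8 (I + 3ZY)⁻¹) Z`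
preserves self-duality. -/
theorem iteration_step_preserves_selfDual
    (m : ℕ) (Y Z : Matrix (Fin m ⊕ Fin m) (Fin m ⊕ Fin m) ℂ)
    (hinv : IsUnit (1 + (3 : ℂ) • (Z * Y)))
    (Y' Z' : Matrix (Fin m ⊕ Fin m) (Fin m ⊕ Fin m) ℂ)
    (hY' : Y' = (3 : ℂ)⁻¹ • (Y * (1 + (8 : ℂ) • (1 + (3 : ℂ) • (Z * Y))⁻¹)))
    (hZ' : Z' = (3 : ℂ)⁻¹ • ((1 + (8 : ℂ) • (1 + (3 : ℂ) • (Z * Y))⁻¹) * Z))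
    (hYd : dual Y = Y) (hZd : dual Z = Z) :
    dual Y' = Y' ∧ dual Z' = Z' := by
  set M : Matrix (Fin m ⊕ Fin m) (Fin m ⊕ Fin m) ℂ := 1 + (3 : ℂ) • (Z * Y) with hM
  set N : Matrix (Fin m ⊕ Fin m) (Fin m ⊕ Fin m) ℂ := 1 + (3 : ℂ) • (Y * Z) with hN
  have hMdet : IsUnit M.det := (Matrix.isUnit_iff_isUnit_det M).mp hinv
  have hMl : M⁻¹ * M = 1 := Matrix.nonsing_inv_mul M hMdet
  have hMr : M * M⁻¹ = 1 := Matrix.mul_nonsing_inv M hMdet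
  have hdM : dual M = N := by
    rw [hM, hN, dual_add, dual_one, dual_smul, dual_mul, hYd, hZd]
  have hNMl : N * dual M⁻¹ = 1 := by
    rw [← hdM, ← dual_mul, hMl, dual_one]
  have hNMr : dual M⁻¹ * N = 1 := by
    rw [← hdM, ← dual_mul, hMr, dual_one]
  have hNunit : IsUnit N := ⟨⟨N, dual M⁻¹, hNMl, hNMr⟩, rfl⟩
  have hNdet : IsUnit N.det := (Matrix.isUnit_iff_isUnit_det N).mp hNunit
  have hNl : N⁻¹ * N = 1 := Matrix.nonsing_inv_mul N hNdet
  have hNr : N * N⁻¹ = 1 := Matrix.mul_nonsing_inv N hNdet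
  have hdMinv : dual M⁻¹ = N⁻¹ := (Matrix.inv_eq_right_inv hNMl).symm
  have hYM : Y * M = N * Y := by
    rw [hM, hN]
    simp only [mul_add, add_mul, mul_one, one_mul, mul_smul_comm, smul_mul_assoc, mul_assoc]
  have hYMinv : Y * M⁻¹ = N⁻¹ * Y := by
    calc Y * M⁻¹ = (N⁻¹ * N) * Y * M⁻¹ := by rw [hNl, one_mul]
    _ = N⁻¹ * (Y * M) * M⁻¹ := by rw [hYM]; noncomm_ring
    _ = N⁻¹ * Y * (M * M⁻¹) := by noncomm_ring
    _ = N⁻¹ * Y := by rw [hMr, mul_one]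
  have hZM : M * Z = Z * N := by
    rw [hM, hN]
    simp only [mul_add, add_mul, mul_one, one_mul, mul_smul_comm, smul_mul_assoc, mul_assoc]
  have hZMinv : M⁻¹ * Z = Z * N⁻¹ := by
    calc M⁻¹ * Z = M⁻¹ * Z * (N * N⁻¹) := by rw [hNr, mul_one]
    _ = M⁻¹ * (M * Z) * N⁻¹ := by rw [hZM]; noncomm_ring
    _ = (M⁻¹ * M) * Z * N⁻¹ := by noncomm_ring
    _ = Z * N⁻¹ := by rw [hMl, one_mul]
  constructor
  · rw [hY', dual_smul, dual_mul, dual_add, dual_one, dual_smul, hdMinv, hYd]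
    rw [add_mul, one_mul, mul_add, mul_one, smul_mul_assoc, mul_smul_comm, hYMinv]
  · rw [hZ', dual_smul, dual_mul, dual_add, dual_one, dual_smul, hdMinv, hZd]
    rw [add_mul, one_mul, mul_add, mul_one, smul_mul_assoc, mul_smul_comm, hZMinv]
end

section
/- Let Γ be the 2m-by-2m block matrix diag(I_m, -I_m). Let Y and Z be 2m-by-2m complex matrices such that I + 3ZY is invertible, and set Y' = (1/3) Y (I + 8 (I + 3ZY)⁻¹) and Z' = (1/3) (I + 8 (I + 3ZY)⁻¹) Z. If Γ Y Γ = Y† and Γ Z Γ = Z†, then Γ Y' Γ = Y'† and Γ Z' Γ = Z'†. -/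
open Matrix

/-- The grading `Γ = diag(I_m, -I_m)` on `ℂ^(m ⊕ m)`. -/
noncomputable def Gamma (m : ℕ) : Matrix (Fin m ⊕ Fin m) (Fin m ⊕ Fin m) ℂ :=
  Matrix.fromBlocks 1 0 0 (-1)

lemma Gamma_mul_Gamma (m : ℕ) : Gamma m * Gamma m = 1 := by
  simp [Gamma, Matrix.fromBlocks_multiply, ← Matrix.fromBlocks_one]

/-- The square-root iteration step
`Y' = (1/3) Y (I + 8 (I + 3ZY)⁻¹)`, `Z' = (1/3) (I + 8 (I + 3ZY)⁻¹) Z`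
preserves the chiral symmetry `Γ X Γ = Xᴴ`. -/
theorem iteration_step_preserves_chiral
    (m : ℕ) (Y Z : Matrix (Fin m ⊕ Fin m) (Fin m ⊕ Fin m) ℂ)
    (hinv : IsUnit (1 + (3 : ℂ) • (Z * Y)))
    (Y' Z' : Matrix (Fin m ⊕ Fin m) (Fin m ⊕ Fin m) ℂ)
    (hY' : Y' = (3 : ℂ)⁻¹ • (Y * (1 + (8 : ℂ) • (1 + (3 : ℂ) • (Z * Y))⁻¹)))
    (hZ' : Z' = (3 : ℂ)⁻¹ • ((1 + (8 : ℂ) • (1 + (3 : ℂ) • (Z * Y))⁻¹) * Z))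
    (hYc : Gamma m * Y * Gamma m = Yᴴ) (hZc : Gamma m * Z * Gamma m = Zᴴ) :
    Gamma m * Y' * Gamma m = Y'ᴴ ∧ Gamma m * Z' * Gamma m = Z'ᴴ := by
  set G := Gamma m with hG
  have hGG : G * G = 1 := Gamma_mul_Gamma m
  have hGcancel : ∀ X : Matrix (Fin m ⊕ Fin m) (Fin m ⊕ Fin m) ℂ,
      G * (G * X) = X := by
    intro X; rw [← mul_assoc, hGG, one_mul]
  have hGunit : IsUnit G := ⟨⟨G, G, hGG, hGG⟩, rfl⟩
  have hGinv : G⁻¹ = G := Matrix.inv_eq_left_inv hGG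
  set A := 1 + (3 : ℂ) • (Z * Y) with hA
  set B := 1 + (3 : ℂ) • (Y * Z) with hB
  have hAc : Aᴴ = G * B * G := by
    have h1 : Aᴴ = 1 + (3 : ℂ) • (Yᴴ * Zᴴ) := by
      simp [hA, Matrix.conjTranspose_add, Matrix.conjTranspose_smul, Matrix.conjTranspose_mul]
    rw [h1, ← hYc, ← hZc, hB]
    simp [Matrix.mul_add, Matrix.add_mul, mul_smul_comm, smul_mul_assoc,
      mul_assoc, hGcancel, hGG]
  have hAunit : IsUnit A := hinv
  have hAHunit : IsUnit Aᴴ := by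
    rw [Matrix.isUnit_iff_isUnit_det] at hAunit ⊢
    rw [Matrix.det_conjTranspose]
    exact hAunit.star
  have hBunit : IsUnit B := by
    have h2 : B = G * Aᴴ * G := by
      rw [hAc]; simp [mul_assoc, hGcancel, hGG]
    rw [h2]
    exact (hGunit.mul hAHunit).mul hGunit
  have hAinvc : (A⁻¹)ᴴ = G * B⁻¹ * G := by
    rw [Matrix.conjTranspose_nonsing_inv, hAc, Matrix.mul_inv_rev, Matrix.mul_inv_rev, hGinv,
      mul_assoc]
  have hswapY : Y * A⁻¹ = B⁻¹ * Y := by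
    have h1 : B * Y = Y * A := by
      simp [hA, hB, Matrix.mul_add, Matrix.add_mul, mul_smul_comm, smul_mul_assoc,
        mul_assoc]
    calc Y * A⁻¹ = B⁻¹ * (B * Y) * A⁻¹ := by
          rw [← mul_assoc, Matrix.nonsing_inv_mul _ ((Matrix.isUnit_iff_isUnit_det _).mp hBunit),
            one_mul]
      _ = B⁻¹ * Y * (A * A⁻¹) := by rw [h1]; simp [mul_assoc]
      _ = B⁻¹ * Y := by
          rw [Matrix.mul_nonsing_inv _ ((Matrix.isUnit_iff_isUnit_det _).mp hAunit), mul_one]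
  have hswapZ : A⁻¹ * Z = Z * B⁻¹ := by
    have h1 : Z * B = A * Z := by
      simp [hA, hB, Matrix.mul_add, Matrix.add_mul, mul_smul_comm, smul_mul_assoc,
        mul_assoc]
    calc A⁻¹ * Z = A⁻¹ * (Z * B) * B⁻¹ := by
          rw [mul_assoc, mul_assoc,
            Matrix.mul_nonsing_inv _ ((Matrix.isUnit_iff_isUnit_det _).mp hBunit), mul_one]
      _ = (A⁻¹ * A) * Z * B⁻¹ := by rw [h1]; simp [mul_assoc]
      _ = Z * B⁻¹ := by
          rw [Matrix.nonsing_inv_mul _ ((Matrix.isUnit_iff_isUnit_det _).mp hAunit), one_mul]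
  constructor
  · rw [hY', Matrix.conjTranspose_smul]
    have hkey : Y * (1 + (8 : ℂ) • A⁻¹) = (1 + (8 : ℂ) • B⁻¹) * Y := by
      rw [Matrix.mul_add, Matrix.add_mul, mul_one, one_mul]
      rw [mul_smul_comm, smul_mul_assoc, hswapY]
    have hct : (Y * (1 + (8 : ℂ) • A⁻¹))ᴴ = (1 + (8 : ℂ) • (A⁻¹)ᴴ) * Yᴴ := by
      simp [Matrix.conjTranspose_mul, Matrix.conjTranspose_add, Matrix.conjTranspose_smul]
    rw [hct, hAinvc, ← hYc, hkey]
    rw [mul_smul_comm, smul_mul_assoc]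
    congr 1
    · norm_num
    · simp [Matrix.add_mul, Matrix.mul_add, mul_smul_comm, smul_mul_assoc,
        mul_assoc, hGcancel]
  · rw [hZ', Matrix.conjTranspose_smul]
    have hkey : (1 + (8 : ℂ) • A⁻¹) * Z = Z * (1 + (8 : ℂ) • B⁻¹) := by
      rw [Matrix.add_mul, Matrix.mul_add, one_mul, mul_one]
      rw [mul_smul_comm, smul_mul_assoc, hswapZ]
    have hct : ((1 + (8 : ℂ) • A⁻¹) * Z)ᴴ = Zᴴ * (1 + (8 : ℂ) • (A⁻¹)ᴴ) := by
      simp [Matrix.conjTranspose_mul, Matrix.conjTranspose_add, Matrix.conjTranspose_smul]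
    rw [hct, hAinvc, ← hZc, hkey]
    rw [mul_smul_comm, smul_mul_assoc]
    congr 1
    · norm_num
    · simp [Matrix.add_mul, Matrix.mul_add, mul_smul_comm, smul_mul_assoc,
        mul_assoc, hGcancel]
end

section
/- Let N = 2m and let Γ be the N-by-N block matrix diag(I_m, -I_m). Suppose U is an N-by-N unitary matrix with Γ U Γ = U†. If there exists a Hermitian matrix H with Γ H = -H Γ and exp(-iH) = U, then sig(UΓ) = 0. -/
open Matrix

section AuxChiral
open Polynomial

lemma my_charmatrix_units_conj {n : Type*} [Fintype n] [DecidableEq n] {R : Type*} [CommRing R] (u : (Matrix n n R)ˣ)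
    (A : Matrix n n R) :
    charmatrix ((u : Matrix n n R) * A * (↑u⁻¹ : Matrix n n R)) =
      (Units.map (RingHom.mapMatrix (C : R →+* R[X])).toMonoidHom u : Matrix n n R[X]) *
        charmatrix A *
      ((Units.map (RingHom.mapMatrix (C : R →+* R[X])).toMonoidHom u)⁻¹ : (Matrix n n R[X])ˣ) := by
  set v := Units.map (RingHom.mapMatrix (C : R →+* R[X])).toMonoidHom u with hv
  have h1 : (v : Matrix n n R[X]) = (C : R →+* R[X]).mapMatrix (u : Matrix n n R) := rfl
  have h2 : ((v⁻¹ : (Matrix n n R[X])ˣ) : Matrix n n R[X]) =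
      (C : R →+* R[X]).mapMatrix ((u⁻¹ : (Matrix n n R)ˣ) : Matrix n n R) := rfl
  have hscalar : (v : Matrix n n R[X]) * Matrix.scalar n (X : R[X]) *
      ((v⁻¹ : (Matrix n n R[X])ˣ) : Matrix n n R[X]) = Matrix.scalar n (X : R[X]) := by
    rw [(Matrix.scalar_commute (X : R[X]) (Commute.all _) (v : Matrix n n R[X])).symm.eq,
      mul_assoc, Units.mul_inv, mul_one]
  rw [charmatrix, charmatrix, mul_sub, sub_mul, hscalar, h1, h2,
    ← _root_.map_mul, ← _root_.map_mul]

lemma my_charpoly_units_conj {n : Type*} [Fintype n] [DecidableEq n] {R : Type*} [CommRing R] (u : (Matrix n n R)ˣ)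
    (A : Matrix n n R) :
    ((u : Matrix n n R) * A * (↑u⁻¹ : Matrix n n R)).charpoly = A.charpoly := by
  rw [Matrix.charpoly, my_charmatrix_units_conj, Matrix.det_units_conj, Matrix.charpoly]

lemma my_charpoly_diagonal {n : Type*} [Fintype n] [DecidableEq n] {R : Type*} [CommRing R] (d : n → R) :
    (Matrix.diagonal d).charpoly = ∏ i, (X - C (d i)) := by
  have h : charmatrix (Matrix.diagonal d) = Matrix.diagonal (fun i => (X : R[X]) - C (d i)) := by
    ext i j
    by_cases hij : i = j
    · subst hij; simp
    · simp [charmatrix_apply_ne _ _ _ hij, Matrix.diagonal_apply_ne _ hij]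
  rw [Matrix.charpoly, h, Matrix.det_diagonal]

end AuxChiral

/-- The signature of a matrix: the number of eigenvalues (roots of the characteristic
polynomial, with multiplicity) with positive real part minus the number with negative real
part.  For an invertible Hermitian matrix this is the usual signature. -/
noncomputable def sig {n : Type*} [Fintype n] [DecidableEq n]
    (X : Matrix n n ℂ) : ℤ :=
  ((X.charpoly.roots.filter fun z => 0 < z.re).card : ℤ) -
    ((X.charpoly.roots.filter fun z => z.re < 0).card : ℤ)

/-- If `U` is unitary with `Γ U Γ = Uᴴ` and there is a Hermitian `H` with
`Γ H = -H Γ` and `exp(-iH) = U`, then `sig (UΓ) = 0`. -/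
theorem chiral_log_exists_implies_sig_zero
    (m : ℕ) (U : Matrix (Fin m ⊕ Fin m) (Fin m ⊕ Fin m) ℂ)
    (hU : Uᴴ * U = 1) (hchiral : Gamma m * U * Gamma m = Uᴴ)
    (H : Matrix (Fin m ⊕ Fin m) (Fin m ⊕ Fin m) ℂ)
    (hHerm : Hᴴ = H) (hanti : Gamma m * H = -(H * Gamma m))
    (hexp : NormedSpace.exp (-(Complex.I • H)) = U) :
    sig (U * Gamma m) = 0 := by
  classical
  have hGG : Gamma m * Gamma m = 1 := by
    rw [Gamma, Matrix.fromBlocks_multiply]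
    norm_num [Matrix.fromBlocks_one]
  let g : (Matrix (Fin m ⊕ Fin m) (Fin m ⊕ Fin m) ℂ)ˣ := ⟨Gamma m, Gamma m, hGG, hGG⟩
  set W := NormedSpace.exp ((-Complex.I / 2) • H) with hW
  have hcomm : ∀ (a b : ℂ), Commute (a • H) (b • H) := fun a b => by
    unfold Commute SemiconjBy
    rw [smul_mul_smul_comm, smul_mul_smul_comm, mul_comm a b]
  have hexpadd : ∀ (a b : ℂ), NormedSpace.exp ((a + b) • H)
      = NormedSpace.exp (a • H) * NormedSpace.exp (b • H) := fun a b => by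
    rw [add_smul]; exact Matrix.exp_add_of_commute _ _ (hcomm a b)
  have hW2 : W * W = U := by
    have hz : (-Complex.I / 2) + (-Complex.I / 2) = -Complex.I := by ring
    rw [hW, ← hexpadd, hz, ← hexp, ← neg_smul]
  have hGWG : Gamma m * W * Gamma m = NormedSpace.exp ((Complex.I / 2) • H) := by
    have hconj : Gamma m * ((-Complex.I / 2) • H) * Gamma m = (Complex.I / 2) • H := by
      rw [Matrix.mul_smul, Matrix.smul_mul, hanti, neg_mul, mul_assoc, hGG,
        mul_one, smul_neg, ← neg_smul]
      congr 1
      ring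
    have hcj := Matrix.exp_units_conj g ((-Complex.I / 2) • H)
    have hg : (g : Matrix (Fin m ⊕ Fin m) (Fin m ⊕ Fin m) ℂ) = Gamma m := rfl
    have hg' : ((g⁻¹ : (Matrix (Fin m ⊕ Fin m) (Fin m ⊕ Fin m) ℂ)ˣ) :
        Matrix (Fin m ⊕ Fin m) (Fin m ⊕ Fin m) ℂ) = Gamma m := rfl
    rw [hg, hg', hconj] at hcj
    exact hcj.symm
  have hWGW : W * Gamma m * W = Gamma m := by
    have h1 : W * (Gamma m * W * Gamma m) = 1 := by
      have hz : (-Complex.I / 2) + (Complex.I / 2) = 0 := by ring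
      rw [hGWG, hW, ← hexpadd, hz, zero_smul, NormedSpace.exp_zero]
    have h2 : W * Gamma m * W * Gamma m = 1 := by
      rw [mul_assoc, mul_assoc, ← mul_assoc (Gamma m) W (Gamma m)]
      exact h1
    have h3 : W * Gamma m * W = W * Gamma m * W * (Gamma m * Gamma m) := by
      rw [hGG, mul_one]
    rw [← mul_assoc, h2, one_mul] at h3
    exact h3
  -- W as a unit
  have hWinv : W * NormedSpace.exp ((Complex.I / 2) • H) = 1 := by
    have hz : (-Complex.I / 2) + (Complex.I / 2) = 0 := by ring
    rw [hW, ← hexpadd, hz, zero_smul, NormedSpace.exp_zero]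
  have hWinv' : NormedSpace.exp ((Complex.I / 2) • H) * W = 1 := by
    have hz : (Complex.I / 2) + (-Complex.I / 2) = 0 := by ring
    rw [hW, ← hexpadd, hz, zero_smul, NormedSpace.exp_zero]
  let w : (Matrix (Fin m ⊕ Fin m) (Fin m ⊕ Fin m) ℂ)ˣ :=
    ⟨W, NormedSpace.exp ((Complex.I / 2) • H), hWinv, hWinv'⟩
  have hUG : U * Gamma m = (w : Matrix _ _ ℂ) * Gamma m * ((w⁻¹ : _ˣ) : Matrix _ _ ℂ) := by
    have hWG : W * Gamma m = Gamma m * ((w⁻¹ : _ˣ) : Matrix _ _ ℂ) := by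
      have : (W * Gamma m * W) * ((w⁻¹ : _ˣ) : Matrix _ _ ℂ)
          = Gamma m * ((w⁻¹ : _ˣ) : Matrix _ _ ℂ) := by rw [hWGW]
      rw [mul_assoc] at this
      have hww : W * ((w⁻¹ : _ˣ) : Matrix _ _ ℂ) = 1 := hWinv
      rw [mul_assoc, hww, mul_one] at this
      exact this
    calc U * Gamma m = W * (W * Gamma m) := by rw [← hW2, mul_assoc]
      _ = W * (Gamma m * ((w⁻¹ : _ˣ) : Matrix _ _ ℂ)) := by rw [hWG]
      _ = W * Gamma m * ((w⁻¹ : _ˣ) : Matrix _ _ ℂ) := (mul_assoc _ _ _).symm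
  have hcp : (U * Gamma m).charpoly = (Gamma m).charpoly := by
    rw [hUG]; exact my_charpoly_units_conj w (Gamma m)
  -- charpoly of Gamma
  have hGdiag : Gamma m = Matrix.diagonal (Sum.elim (fun _ => (1:ℂ)) (fun _ => (-1:ℂ))) := by
    ext i j
    rcases i with i | i <;> rcases j with j | j <;>
      by_cases hij : i = j <;>
      simp [Gamma, Matrix.diagonal_apply, Matrix.one_apply, hij]
  have hcpG : (Gamma m).charpoly = (Polynomial.X - Polynomial.C (1:ℂ)) ^ m * (Polynomial.X - Polynomial.C (-1:ℂ)) ^ m := by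
    rw [hGdiag, my_charpoly_diagonal, Fintype.prod_sum_type]
    simp [Finset.prod_const]
  have hne : ((Polynomial.X - Polynomial.C (1:ℂ)) ^ m * (Polynomial.X - Polynomial.C (-1:ℂ)) ^ m) ≠ 0 :=
    (((Polynomial.monic_X_sub_C (1:ℂ)).pow m).mul ((Polynomial.monic_X_sub_C (-1:ℂ)).pow m)).ne_zero
  have hroots : (U * Gamma m).charpoly.roots
      = Multiset.replicate m (1:ℂ) + Multiset.replicate m (-1:ℂ) := by
    rw [hcp, hcpG, Polynomial.roots_mul hne, Polynomial.roots_pow, Polynomial.roots_pow,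
      Polynomial.roots_X_sub_C, Polynomial.roots_X_sub_C, Multiset.nsmul_singleton,
      Multiset.nsmul_singleton]
  rw [sig, hroots]
  have hp1 : ((Multiset.replicate m (1:ℂ) + Multiset.replicate m (-1:ℂ)).filter
      fun z => 0 < z.re) = Multiset.replicate m (1:ℂ) := by
    rw [Multiset.filter_add]
    rw [Multiset.filter_eq_self.2 (fun a ha => by
      rw [Multiset.eq_of_mem_replicate ha]; norm_num)]
    rw [Multiset.filter_eq_nil.2 (fun a ha => by
      rw [Multiset.eq_of_mem_replicate ha]; norm_num), add_zero]
  have hp2 : ((Multiset.replicate m (1:ℂ) + Multiset.replicate m (-1:ℂ)).filter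
      fun z => z.re < 0) = Multiset.replicate m (-1:ℂ) := by
    rw [Multiset.filter_add]
    rw [Multiset.filter_eq_nil.2 (fun a ha => by
      rw [Multiset.eq_of_mem_replicate ha]; norm_num)]
    rw [Multiset.filter_eq_self.2 (fun a ha => by
      rw [Multiset.eq_of_mem_replicate ha]; norm_num), zero_add]
  rw [hp1, hp2, Multiset.card_replicate, Multiset.card_replicate, sub_self]
end

section
/- Let U be an n-by-n complex unitary matrix that is complex symmetric, i.e. Uᵀ = U. Then there exists an n-by-n real symmetric matrix H (Hᵀ = H with all entries real) such that exp(iH) = U, where H is regarded as a complex matrix. -/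
open Matrix

section Aux

open Complex Polynomial

open scoped Matrix.Norms.L2Operator

noncomputable abbrev matCStarAlgebra (n : ℕ) : CStarAlgebra (Matrix (Fin n) (Fin n) ℂ) where

attribute [local instance] matCStarAlgebra

private lemma aeval_transpose {n : ℕ} (M : Matrix (Fin n) (Fin n) ℂ) (p : ℂ[X]) :
    (Polynomial.aeval M p)ᵀ = Polynomial.aeval Mᵀ p := by
  induction p using Polynomial.induction_on' with
  | add p q hp hq => simp [hp, hq]
  | monomial k a =>
      simp [Polynomial.aeval_monomial, Algebra.algebraMap_eq_smul_one, smul_mul_assoc,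
        one_mul, Matrix.transpose_smul, Matrix.transpose_pow]

private lemma mem_slitPlane_of_abs_one {u : ℂ} (h1 : ‖u‖ = 1) (h2 : u ≠ -1) :
    u ∈ Complex.slitPlane := by
  by_cases him : u.im = 0
  · have hre : u = (u.re : ℂ) := by
      apply Complex.ext <;> simp [him]
    rw [hre, Complex.norm_real, Real.norm_eq_abs] at h1
    rcases abs_eq (by norm_num : (0:ℝ) ≤ 1) |>.mp h1 with h | h
    · exact Or.inl (by simp [h])
    · exact absurd (by apply Complex.ext <;> simp [him, h]) h2
  · exact Or.inr him

private lemma key {n : ℕ} (U : Matrix (Fin n) (Fin n) ℂ)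
    (hU : Uᴴ * U = 1) (hsymm : Uᵀ = U) :
    ∃ H : Matrix (Fin n) (Fin n) ℝ, Hᵀ = H ∧
      NormedSpace.exp (Complex.I • H.map (fun x : ℝ => (x : ℂ))) = U := by
  classical
  have hU' : U * Uᴴ = 1 := mul_eq_one_comm.mp hU
  have hUmem : U ∈ unitary (Matrix (Fin n) (Fin n) ℂ) := ⟨hU, hU'⟩
  haveI hnormal : IsStarNormal U := ⟨by
    rw [Commute, SemiconjBy]
    show Uᴴ * U = U * Uᴴ
    rw [hU, hU']⟩
  have hspec : spectrum ℂ U ⊆ Metric.sphere (0:ℂ) 1 :=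
    spectrum.subset_circle_of_unitary hUmem
  have habs : ∀ z ∈ spectrum ℂ U, ‖z‖ = 1 := by
    intro z hz
    have := hspec hz
    rwa [mem_sphere_zero_iff_norm] at this
  have hfin : (spectrum ℂ U).Finite := Matrix.finite_spectrum U
  -- pick a point on the circle avoiding the spectrum
  obtain ⟨α, hα⟩ : ∃ α, α ∈ Set.Ioo (-Real.pi) Real.pi \ (Complex.arg '' spectrum ℂ U) := by
    have hinf : (Set.Ioo (-Real.pi) Real.pi).Infinite :=
      Set.Ioo_infinite (by linarith [Real.pi_pos])
    exact (hinf.diff (hfin.image _)).nonempty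
  set v : ℂ := Complex.exp (α * Complex.I) with hv_def
  have hv_abs : ‖v‖ = 1 := Complex.norm_exp_ofReal_mul_I α
  have hv_arg : Complex.arg v = α := by
    rw [hv_def, Complex.arg_exp_mul_I]
    rw [toIocMod_eq_self]
    constructor
    · linarith [hα.1.1]
    · linarith [hα.1.2]
  have hv_notin : v ∉ spectrum ℂ U := by
    intro hv
    exact hα.2 ⟨v, hv, hv_arg⟩
  set w : ℂ := -v with hw_def
  have hw_abs : ‖w‖ = 1 := by rw [hw_def, norm_neg]; exact hv_abs
  have hw_ne : w ≠ 0 := by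
    intro h
    rw [h] at hw_abs; simp at hw_abs
  -- the angle function
  set θf : ℂ → ℝ := fun z => Complex.arg (z / w) + Complex.arg w with hθf_def
  have hslit : ∀ z ∈ spectrum ℂ U, z / w ∈ Complex.slitPlane := by
    intro z hz
    apply mem_slitPlane_of_abs_one
    · rw [norm_div, habs z hz, hw_abs, div_one]
    · intro h
      have : z = -w := by
        field_simp at h
        linear_combination h
      rw [hw_def, neg_neg] at this
      exact hv_notin (this ▸ hz)
  have hexp : ∀ z ∈ spectrum ℂ U, Complex.exp (Complex.I * (θf z : ℂ)) = z := by
    intro z hz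
    have h1 : Complex.exp ((Complex.arg (z / w) : ℂ) * Complex.I) = z / w := by
      have := Complex.norm_mul_exp_arg_mul_I (z / w)
      rwa [norm_div, habs z hz, hw_abs, div_one, Complex.ofReal_one, one_mul] at this
    have h2 : Complex.exp ((Complex.arg w : ℂ) * Complex.I) = w := by
      have := Complex.norm_mul_exp_arg_mul_I w
      rwa [hw_abs, Complex.ofReal_one, one_mul] at this
    rw [hθf_def]
    push_cast
    rw [mul_add, Complex.exp_add, mul_comm Complex.I, mul_comm Complex.I, h1, h2]
    exact div_mul_cancel₀ z hw_ne
  have hcont : ContinuousOn (fun z : ℂ => (θf z : ℂ)) (spectrum ℂ U) := by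
    intro z hz
    apply ContinuousAt.continuousWithinAt
    apply Complex.continuous_ofReal.continuousAt.comp
    apply ContinuousAt.add _ continuousAt_const
    have hdiv : ContinuousAt (fun y : ℂ => y / w) z := by fun_prop
    exact ContinuousAt.comp (g := Complex.arg) (f := fun y : ℂ => y / w) (x := z)
      (Complex.continuousAt_arg (hslit z hz)) hdiv
  -- interpolation polynomial
  set sFin : Finset ℂ := hfin.toFinset with hsFin_def
  set p : ℂ[X] := Lagrange.interpolate sFin id (fun z => (θf z : ℂ)) with hp_def
  have heval : ∀ z ∈ spectrum ℂ U, p.eval z = (θf z : ℂ) := by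
    intro z hz
    have hmem : z ∈ sFin := hfin.mem_toFinset.mpr hz
    exact Lagrange.eval_interpolate_at_node _ (Set.injOn_id _) hmem
  set Hc : Matrix (Fin n) (Fin n) ℂ := cfc (fun z : ℂ => (θf z : ℂ)) U with hHc_def
  have hcfcp : Hc = Polynomial.aeval U p := by
    rw [hHc_def, ← cfc_polynomial p U]
    exact cfc_congr fun z hz => (heval z hz).symm
  have hHcT : Hcᵀ = Hc := by
    rw [hcfcp, aeval_transpose, hsymm]
  have hHcStar : star Hc = Hc := by
    rw [hHc_def, ← cfc_star]
    exact cfc_congr fun z hz => by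
      simp [Complex.star_def, Complex.conj_ofReal]
  -- real entries
  have hsymm2 : ∀ i j, Hc i j = Hc j i := fun i j => congrFun (congrFun hHcT.symm i) j
  have hreal : ∀ i j, (starRingEnd ℂ) (Hc i j) = Hc i j := by
    intro i j
    have h1 : (star Hc) i j = (starRingEnd ℂ) (Hc j i) := rfl
    rw [hHcStar] at h1
    conv_lhs => rw [hsymm2 i j]
    exact h1.symm
  refine ⟨Matrix.of fun i j => (Hc i j).re, ?_, ?_⟩
  · ext i j
    show (Hc j i).re = (Hc i j).re
    rw [hsymm2 i j]
  · have hmap : (Matrix.of fun i j => (Hc i j).re).map (fun x : ℝ => (x : ℂ)) = Hc := by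
      ext i j
      simp only [Matrix.map_apply, Matrix.of_apply]
      exact Complex.conj_eq_iff_re.mp (hreal i j)
    rw [hmap]
    have hIH : Complex.I • Hc = cfc (fun z : ℂ => Complex.I * (θf z : ℂ)) U := by
      rw [hHc_def]
      exact (cfc_const_mul Complex.I _ U hcont).symm
    haveI hnorm2 : IsStarNormal (Complex.I • Hc) := by
      rw [hIH]; infer_instance
    have hexp_cont : ContinuousOn (Complex.exp)
        ((fun z : ℂ => Complex.I * (θf z : ℂ)) '' spectrum ℂ U) :=
      Complex.continuous_exp.continuousOn
    have hmul : ContinuousOn (fun z : ℂ => Complex.I * (θf z : ℂ)) (spectrum ℂ U) :=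
      continuousOn_const.mul hcont
    calc NormedSpace.exp (Complex.I • Hc)
        = cfc Complex.exp (Complex.I • Hc) := (CFC.complex_exp_eq_normedSpace_exp hnorm2).symm
      _ = cfc (fun z : ℂ => Complex.exp (Complex.I * (θf z : ℂ))) U := by
          rw [hIH, ← cfc_comp Complex.exp (fun z : ℂ => Complex.I * (θf z : ℂ)) U hnormal
            hexp_cont hmul]
          rfl
      _ = cfc (fun z : ℂ => z) U := cfc_congr fun z hz => hexp z hz
      _ = U := cfc_id' ℂ U

end Aux

/-- Every complex symmetric unitary matrix `U` has a logarithm of the form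
`iH` with `H` real symmetric: `exp(iH) = U`. -/
theorem symmetric_unitary_has_real_symmetric_log
    (n : ℕ) (U : Matrix (Fin n) (Fin n) ℂ)
    (hU : Uᴴ * U = 1) (hsymm : Uᵀ = U) :
    ∃ H : Matrix (Fin n) (Fin n) ℝ, Hᵀ = H ∧
      NormedSpace.exp (Complex.I • H.map (fun x : ℝ => (x : ℂ))) = U := by
  exact key U hU hsymm
end
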